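/- arXiv:2311.14051 — 3 statements merged into one kernel-verified Lean document; each statement's English description precedes it below -/
import Mathlib

section
/- For every α ∈ [0,n) there exists a nonnegative solution u of the heat equation on ℝⁿ × (0,∞), given as heat extension of a finite Radon measure, such that the set T_α(u) = { x : limsup_{t→0⁺} t^{α/2} u(x,t) > 0 } has Hausdorff dimension exactly n − α. -/
open MeasureTheory Filter Metric Set

noncomputable def heatK (n : ℕ) (x : EuclideanSpace ℝ (Fin n)) (t : ℝ) : ℝ :=
  (4 * Real.pi * t) ^ (-(n : ℝ) / 2) * Real.exp (-‖x‖ ^ 2 / (4 * t))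

open scoped ENNReal NNReal Topology

namespace S12

abbrev G := ℕ → ZMod 2

def Kuniv : TopologicalSpace.PositiveCompacts G :=
  ⟨⟨Set.univ, isCompact_univ⟩, by simp⟩

noncomputable def P : Measure G := Measure.addHaarMeasure Kuniv

instance : P.IsAddLeftInvariant := Measure.isAddLeftInvariant_addHaarMeasure Kuniv

instance : IsProbabilityMeasure P :=
  ⟨by simpa [P, Kuniv] using Measure.addHaarMeasure_self (K₀ := Kuniv)⟩

def cyl (k : ℕ) (v : G) : Set G := {ω | ∀ i, i < k → ω i = v i}

lemma measurableSet_cyl (k : ℕ) (v : G) : MeasurableSet (cyl k v) := by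
  have : cyl k v = ⋂ i ∈ Finset.range k, (fun ω : G => ω i) ⁻¹' {v i} := by
    ext ω; simp [cyl]
  rw [this]
  exact MeasurableSet.biInter (Finset.range k).countable_toSet fun i _ =>
    (measurable_pi_apply i) (measurableSet_singleton (v i))

lemma P_cyl_eq (k : ℕ) (v : G) : P (cyl k v) = P (cyl k 0) := by
  have h : cyl k v = (fun ω => v + ω) ⁻¹' (cyl k 0) := by
    ext ω
    simp only [cyl, mem_preimage, mem_setOf_eq, Pi.add_apply, Pi.zero_apply]
    constructor
    · intro h i hi; rw [h i hi]; exact CharTwo.add_self_eq_zero _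
    · intro h i hi
      have h2 := eq_neg_of_add_eq_zero_right (h i hi)
      rw [h2, CharTwo.neg_eq]
  rw [h, measure_preimage_add]

def extw (k : ℕ) (w : Fin k → ZMod 2) : G := fun i => if h : i < k then w ⟨i, h⟩ else 0

lemma extw_lt (k : ℕ) (w : Fin k → ZMod 2) {i : ℕ} (hi : i < k) : extw k w i = w ⟨i, hi⟩ := by
  simp [extw, hi]

lemma P_cyl (k : ℕ) (v : G) : P (cyl k v) = 2⁻¹ ^ k := by
  classical
  have hagree : ∀ w : Fin k → ZMod 2, P (cyl k (extw k w)) = P (cyl k 0) := fun w =>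
    P_cyl_eq k (extw k w)
  have hdisj : Pairwise (Function.onFun Disjoint fun w : Fin k → ZMod 2 =>
      cyl k (extw k w)) := by
    intro w w' hne
    refine Set.disjoint_left.2 fun ω hw hw' => hne ?_
    funext j
    have h1 := hw j.1 j.2
    have h2 := hw' j.1 j.2
    rw [extw_lt k w j.2] at h1
    rw [extw_lt k w' j.2] at h2
    rw [← h1, ← h2]
  have hcover : (⋃ w : Fin k → ZMod 2, cyl k (extw k w)) = univ := by
    refine eq_univ_of_forall fun ω => Set.mem_iUnion.2 ⟨fun j => ω j.1, fun i hi => ?_⟩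
    rw [extw_lt k _ hi]
  have hsum : ∑' w : Fin k → ZMod 2, P (cyl k (extw k w)) = 1 := by
    rw [← measure_iUnion hdisj fun w => measurableSet_cyl _ _, hcover]
    exact measure_univ
  rw [tsum_fintype] at hsum
  simp only [hagree, Finset.sum_const, Finset.card_univ, nsmul_eq_mul] at hsum
  have hcard : (Fintype.card (Fin k → ZMod 2) : ℝ≥0∞) = 2 ^ k := by
    rw [Fintype.card_fun]
    simp [ZMod.card]
  rw [hcard] at hsum
  rw [P_cyl_eq k v]
  calc P (cyl k 0) = (2⁻¹ ^ k * 2 ^ k) * P (cyl k 0) := by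
        rw [← ENNReal.inv_pow, ENNReal.inv_mul_cancel (by positivity) (by simp), one_mul]
    _ = 2⁻¹ ^ k * ((2:ℝ≥0∞) ^ k * P (cyl k 0)) := by ring
    _ = 2⁻¹ ^ k := by rw [hsum, mul_one]



def dig (z : ZMod 2) : ℝ := z.val

lemma dig_nonneg (z : ZMod 2) : 0 ≤ dig z := Nat.cast_nonneg _

lemma dig_le_one (z : ZMod 2) : dig z ≤ 1 := by
  have h : z.val ≤ 1 := Nat.lt_succ_iff.1 z.val_lt
  show (z.val : ℝ) ≤ 1
  exact_mod_cast h

lemma dig_one : dig 1 = 1 := by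
  show ((1 : ZMod 2).val : ℝ) = 1
  rw [ZMod.val_one]; norm_num

lemma dig_zero : dig 0 = 0 := by
  show ((0 : ZMod 2).val : ℝ) = 0
  rw [ZMod.val_zero]; norm_num

section Bsec

variable {a s : ℝ} (ha : 0 < a) (ha2 : a ≤ 1/2)

def term (a : ℝ) (ω : G) (i : ℕ) : ℝ := dig (ω i) * ((1 - a) * a ^ i)

noncomputable def L (a : ℝ) (k : ℕ) (ω : G) : ℝ := ∑ i ∈ Finset.range k, term a ω i

noncomputable def hmap (a : ℝ) (ω : G) : ℝ := ∑' i, term a ω i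

include ha ha2

lemma a_lt_one : a < 1 := lt_of_le_of_lt ha2 (by norm_num)

lemma term_nonneg (ω : G) (i : ℕ) : 0 ≤ term a ω i := by
  have h1 : (0:ℝ) ≤ 1 - a := by linarith [a_lt_one ha ha2]
  exact mul_nonneg (dig_nonneg _) (mul_nonneg h1 (pow_nonneg ha.le i))

lemma term_le (ω : G) (i : ℕ) : term a ω i ≤ (1 - a) * a ^ i := by
  have h1 : (0:ℝ) ≤ 1 - a := by linarith [a_lt_one ha ha2]
  have h2 : (0:ℝ) ≤ (1-a) * a ^ i := by positivity
  calc term a ω i ≤ 1 * ((1-a) * a ^ i) :=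
        mul_le_mul_of_nonneg_right (dig_le_one _) h2
    _ = (1-a) * a ^ i := one_mul _

lemma summable_geom_aux : Summable (fun i : ℕ => (1 - a) * a ^ i) :=
  (summable_geometric_of_lt_one ha.le (a_lt_one ha ha2)).mul_left _

lemma summable_term (ω : G) : Summable (term a ω) :=
  Summable.of_nonneg_of_le (term_nonneg ha ha2 ω) (term_le ha ha2 ω) (summable_geom_aux ha ha2)

lemma tsum_tail_geom (k : ℕ) : ∑' i : ℕ, (1 - a) * a ^ (i + k) = a ^ k := by
  have h1 : ∀ i : ℕ, (1 - a) * a ^ (i + k) = ((1-a) * a ^ k) * a ^ i := by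
    intro i; rw [pow_add]; ring
  have hne : (1:ℝ) - a ≠ 0 := by have := a_lt_one ha ha2; intro h; linarith [(by linarith : a = 1)]
  rw [tsum_congr h1, tsum_mul_left, tsum_geometric_of_lt_one ha.le (a_lt_one ha ha2)]
  field_simp

lemma hmap_mem (ω : G) (k : ℕ) : hmap a ω ∈ Icc (L a k ω) (L a k ω + a ^ k) := by
  have hsum := summable_term ha ha2 ω
  have hsplit := Summable.sum_add_tsum_nat_add k hsum
  have htail0 : 0 ≤ ∑' i, term a ω (i + k) :=
    tsum_nonneg fun i => term_nonneg ha ha2 ω _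
  have htail1 : ∑' i, term a ω (i + k) ≤ a ^ k := by
    rw [← tsum_tail_geom ha ha2 k]
    exact Summable.tsum_le_tsum (fun i => term_le ha ha2 ω _)
      ((summable_nat_add_iff k).2 hsum) ((summable_nat_add_iff k).2 (summable_geom_aux ha ha2))
  have hL : L a k ω = ∑ i ∈ Finset.range k, term a ω i := rfl
  constructor
  · rw [hmap, ← hsplit]; linarith
  · rw [hmap, ← hsplit]; linarith

omit ha ha2 in
lemma L_congr {ω ω' : G} (k : ℕ) (h : ∀ i < k, ω i = ω' i) : L a k ω = L a k ω' := by
  unfold L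
  refine Finset.sum_congr rfl fun i hi => ?_
  rw [term, term, h i (Finset.mem_range.1 hi)]

lemma L_sub_ge {ω ω' : G} {i₀ k : ℕ} (hik : i₀ < k) (hlt : ∀ i < i₀, ω i = ω' i)
    (hd : ω i₀ = 1) (hd' : ω' i₀ = 0) : a ^ k ≤ L a k ω - L a k ω' := by
  have h1a : (0:ℝ) ≤ 1 - a := by linarith [a_lt_one ha ha2]
  have hsub : L a k ω - L a k ω' = ∑ i ∈ Finset.range k, (term a ω i - term a ω' i) := by
    rw [L, L, Finset.sum_sub_distrib]
  have hzero : ∀ i ∈ Finset.Ico 0 i₀, term a ω i - term a ω' i = 0 := by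
    intro i hi
    have := hlt i (by simpa using (Finset.mem_Ico.1 hi).2)
    rw [term, term, this, sub_self]
  have hsplit : ∑ i ∈ Finset.range k, (term a ω i - term a ω' i)
      = ∑ i ∈ Finset.Ico i₀ k, (term a ω i - term a ω' i) := by
    rw [Finset.range_eq_Ico, ← Finset.sum_Ico_consecutive _ (Nat.zero_le i₀) hik.le,
      Finset.sum_eq_zero hzero, zero_add]
  have hbot : ∑ i ∈ Finset.Ico i₀ k, (term a ω i - term a ω' i)
      = (term a ω i₀ - term a ω' i₀) + ∑ i ∈ Finset.Ico (i₀+1) k, (term a ω i - term a ω' i) :=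
    Finset.sum_eq_sum_Ico_succ_bot hik _
  have hterm0 : term a ω i₀ - term a ω' i₀ = (1 - a) * a ^ i₀ := by
    rw [term, term, hd, hd', dig_one, dig_zero]; ring
  have hrest : ∀ i ∈ Finset.Ico (i₀+1) k, -((1-a) * a ^ i) ≤ term a ω i - term a ω' i := by
    intro i _
    have := term_nonneg ha ha2 ω i
    have := term_le ha ha2 ω' i
    linarith
  have hgeom : ∑ i ∈ Finset.Ico (i₀+1) k, ((1-a) * a ^ i) = a ^ (i₀+1) - a ^ k := by
    rw [← Finset.mul_sum, geom_sum_Ico (ne_of_lt (a_lt_one ha ha2)) hik]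
    have hne : a - 1 ≠ 0 := by intro h; exact (absurd (by linarith : a = 1) (ne_of_lt (a_lt_one ha ha2)))
    field_simp
    ring
  have hsum_rest : -(a ^ (i₀+1) - a ^ k) ≤ ∑ i ∈ Finset.Ico (i₀+1) k, (term a ω i - term a ω' i) := by
    rw [← hgeom, ← Finset.sum_neg_distrib]
    exact Finset.sum_le_sum hrest
  have hpow : (0:ℝ) ≤ a ^ i₀ := pow_nonneg ha.le i₀
  have hpowk : a ^ (i₀ + 1) = a * a ^ i₀ := by ring
  have h2a : (0:ℝ) ≤ 1 - 2*a := by linarith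
  rw [hsub, hsplit, hbot, hterm0]
  nlinarith [mul_nonneg h2a hpow]

omit ha ha2 in
lemma zmod2_cases : ∀ z w : ZMod 2, z ≠ w → (z = 1 ∧ w = 0) ∨ (z = 0 ∧ w = 1) := by decide

lemma L_sep {ω ω' : G} {k : ℕ} (hne : ∃ i, i < k ∧ ω i ≠ ω' i) :
    a ^ k ≤ |L a k ω - L a k ω'| := by
  classical
  obtain ⟨j, hjk, hjne⟩ := hne
  have hp : ∃ i, ω i ≠ ω' i := ⟨j, hjne⟩
  set i₀ := Nat.find hp with hi₀
  have hi₀k : i₀ < k := lt_of_le_of_lt (Nat.find_min' hp hjne) hjk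
  have hlt : ∀ i < i₀, ω i = ω' i := fun i hi => not_not.1 (Nat.find_min hp hi)
  have hdiff : ω i₀ ≠ ω' i₀ := Nat.find_spec hp
  rcases zmod2_cases _ _ hdiff with ⟨h1, h0⟩ | ⟨h0, h1⟩
  · exact le_trans (L_sub_ge ha ha2 hi₀k hlt h1 h0) (le_abs_self _)
  · rw [abs_sub_comm]
    refine le_trans (L_sub_ge ha ha2 hi₀k (fun i hi => (hlt i hi).symm) h1 h0) (le_abs_self _)

end Bsec

section Csec

variable {a s : ℝ} (ha : 0 < a) (ha2 : a ≤ 1/2)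

include ha ha2

lemma continuous_hmap : Continuous (hmap a) := by
  have h1a : (0:ℝ) ≤ 1 - a := by linarith [a_lt_one ha ha2]
  refine continuous_tsum (fun i => ?_) (summable_geom_aux ha ha2) (fun i ω => ?_)
  · show Continuous fun ω : G => dig (ω i) * ((1 - a) * a ^ i)
    have hdig2 : Continuous dig := continuous_of_discreteTopology
    have hdig : Continuous fun ω : G => dig (ω i) := hdig2.comp (continuous_apply i)
    exact hdig.mul continuous_const
  · rw [Real.norm_eq_abs, abs_of_nonneg (term_nonneg ha ha2 ω i)]
    exact term_le ha ha2 ω i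

lemma measurable_hmap : Measurable (hmap a) := (continuous_hmap ha ha2).measurable

lemma meas_interval_le (x r : ℝ) (hr : 0 ≤ r) (k : ℕ) :
    P (hmap a ⁻¹' Icc (x - r) (x + r)) ≤ (⌊2*r/a^k⌋₊ + 2) * 2⁻¹ ^ k := by
  classical
  have hak : (0:ℝ) < a ^ k := pow_pos ha k
  set S : Finset (Fin k → ZMod 2) :=
    Finset.univ.filter (fun w => L a k (extw k w) ∈ Icc (x - r - a^k) (x + r)) with hS
  have hsub : hmap a ⁻¹' Icc (x - r) (x + r) ⊆ ⋃ w ∈ S, cyl k (extw k w) := by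
    intro σ hσ
    simp only [mem_preimage, mem_Icc] at hσ
    set w : Fin k → ZMod 2 := fun j => σ j.1 with hw
    have hagree : ∀ i < k, extw k w i = σ i := by
      intro i hi; rw [extw_lt k w hi]
    have hLeq : L a k (extw k w) = L a k σ := L_congr k hagree
    have hmem := hmap_mem ha ha2 σ k
    simp only [mem_Icc] at hmem
    refine Set.mem_biUnion (show w ∈ S from ?_) (show σ ∈ cyl k (extw k w) from ?_)
    · rw [hS, Finset.mem_filter]
      exact ⟨Finset.mem_univ _, by rw [hLeq]; constructor <;> [linarith; linarith]⟩
    · intro i hi; exact (hagree i hi).symm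
  have hmeas : P (hmap a ⁻¹' Icc (x - r) (x + r)) ≤ ∑ w ∈ S, P (cyl k (extw k w)) :=
    le_trans (measure_mono hsub) (measure_biUnion_finset_le S _)
  have hcard : S.card ≤ ⌊2*r/a^k⌋₊ + 2 := by
    have hfloorlt : ∀ w ∈ S, (fun w => ⌊(L a k (extw k w) - (x - r - a^k)) / a^k⌋₊) w ∈
        Finset.range (⌊2*r/a^k⌋₊ + 2) := by
      intro w hwS
      rw [hS, Finset.mem_filter] at hwS
      obtain ⟨-, h1, h2⟩ := hwS
      have hnum : (L a k (extw k w) - (x - r - a^k)) / a^k ≤ 2*r/a^k + 1 := by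
        rw [div_le_iff₀ hak]
        have : 2*r/a^k * a^k = 2*r := div_mul_cancel₀ _ (ne_of_gt hak)
        nlinarith [this]
      have h0 : (0:ℝ) ≤ 2*r/a^k := by positivity
      have := Nat.floor_le_floor (R := ℝ) hnum
      rw [Nat.floor_add_one h0] at this
      exact Finset.mem_range.2 (Nat.lt_succ_of_le this)
    refine le_trans (Finset.card_le_card_of_injOn _ hfloorlt ?_) (by simp)
    intro w hw w' hw' heq
    by_contra hne
    have hex : ∃ i, i < k ∧ extw k w i ≠ extw k w' i := by
      have : ∃ j : Fin k, w j ≠ w' j := by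
        by_contra hc
        push_neg at hc
        exact hne (funext hc)
      obtain ⟨j, hj⟩ := this
      exact ⟨j.1, j.2, by rw [extw_lt k w j.2, extw_lt k w' j.2]; simpa using hj⟩
    have hsep := L_sep ha ha2 hex
    rw [Finset.mem_coe, hS, Finset.mem_filter] at hw hw'
    obtain ⟨-, hw1, hw2⟩ := hw
    obtain ⟨-, hw'1, hw'2⟩ := hw'
    set u := L a k (extw k w) - (x - r - a^k) with hu
    set v := L a k (extw k w') - (x - r - a^k) with hv
    have hu0 : 0 ≤ u := by rw [hu]; linarith
    have hv0 : 0 ≤ v := by rw [hv]; linarith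
    have huv : |u - v| ≥ a^k := by
      rw [hu, hv]
      have : u - v = L a k (extw k w) - L a k (extw k w') := by rw [hu, hv]; ring
      rw [show L a k (extw k w) - (x - r - a ^ k) - (L a k (extw k w') - (x - r - a ^ k)) =
        L a k (extw k w) - L a k (extw k w') by ring]
      exact hsep
    have h1 : u / a^k < ⌊u / a^k⌋₊ + 1 := Nat.lt_floor_add_one _
    have h2 : v / a^k < ⌊v / a^k⌋₊ + 1 := Nat.lt_floor_add_one _
    have h3 : (⌊u / a^k⌋₊ : ℝ) ≤ u / a^k := Nat.floor_le (by positivity)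
    have h4 : (⌊v / a^k⌋₊ : ℝ) ≤ v / a^k := Nat.floor_le (by positivity)
    have heq' : (⌊u / a^k⌋₊ : ℝ) = ⌊v / a^k⌋₊ := by exact_mod_cast heq
    have hu1 : u < (⌊u / a^k⌋₊ : ℝ) * a^k + a^k := by
      have h := (div_lt_iff₀ hak).1 h1
      rw [add_mul, one_mul] at h
      linarith
    have hv1 : v < (⌊v / a^k⌋₊ : ℝ) * a^k + a^k := by
      have h := (div_lt_iff₀ hak).1 h2
      rw [add_mul, one_mul] at h
      linarith
    have hu2 : (⌊u / a^k⌋₊ : ℝ) * a^k ≤ u := (le_div_iff₀ hak).1 h3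
    have hv2 : (⌊v / a^k⌋₊ : ℝ) * a^k ≤ v := (le_div_iff₀ hak).1 h4
    have heqm : (⌊u / a^k⌋₊ : ℝ) * a^k = (⌊v / a^k⌋₊ : ℝ) * a^k := by rw [heq']
    have habs : |u - v| < a^k := by
      rw [abs_lt]
      constructor <;> linarith
    linarith [huv, habs]
  calc P (hmap a ⁻¹' Icc (x - r) (x + r)) ≤ ∑ w ∈ S, P (cyl k (extw k w)) := hmeas
    _ = ∑ w ∈ S, (2⁻¹:ℝ≥0∞) ^ k := by
        refine Finset.sum_congr rfl fun w _ => P_cyl k _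
    _ = S.card * 2⁻¹ ^ k := by rw [Finset.sum_const, nsmul_eq_mul]
    _ ≤ (⌊2*r/a^k⌋₊ + 2) * 2⁻¹ ^ k := by
        gcongr
        exact_mod_cast Nat.cast_le.2 hcard

lemma meas_interval_ge (ω : G) (k : ℕ) (r : ℝ) (hr : a^k ≤ r) :
    (2⁻¹:ℝ≥0∞) ^ k ≤ P (hmap a ⁻¹' Icc (hmap a ω - r) (hmap a ω + r)) := by
  have hsub : cyl k ω ⊆ hmap a ⁻¹' Icc (hmap a ω - r) (hmap a ω + r) := by
    intro σ hσ
    have hL : L a k σ = L a k ω := L_congr k fun i hi => hσ i hi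
    have h1 := hmap_mem ha ha2 σ k
    have h2 := hmap_mem ha ha2 ω k
    simp only [mem_Icc] at h1 h2 ⊢
    rw [hL] at h1
    constructor <;> [linarith [h1.1, h1.2, h2.1, h2.2]; linarith [h1.1, h1.2, h2.1, h2.2]]
  calc (2⁻¹:ℝ≥0∞) ^ k = P (cyl k ω) := (P_cyl k ω).symm
    _ ≤ _ := measure_mono hsub

lemma exists_pow_k (ρ : ℝ) (hρ : 0 < ρ) (hρ1 : ρ ≤ 1) : ∃ k : ℕ, a^k ≤ ρ ∧ a*ρ ≤ a^k := by
  have hex : ∃ k : ℕ, a^k ≤ ρ := by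
    obtain ⟨k, hk⟩ := exists_pow_lt_of_lt_one hρ (a_lt_one ha ha2)
    exact ⟨k, hk.le⟩
  classical
  set k := Nat.find hex with hk
  refine ⟨k, Nat.find_spec hex, ?_⟩
  match hkk : k with
  | 0 => simpa using le_trans (by nlinarith : a * ρ ≤ 1) (le_refl _)
  | m+1 =>
    have hm : ¬ (a^m ≤ ρ) := Nat.find_min hex (by omega)
    push_neg at hm
    calc a * ρ ≤ a * a^m := by nlinarith
      _ = a^(m+1) := by ring
omit ha ha2 in
lemma twoinv_pow_ennreal (k : ℕ) : ((2:ℝ≥0∞)⁻¹) ^ k = ENNReal.ofReal ((2⁻¹:ℝ)^k) := by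
  rw [ENNReal.ofReal_pow (by norm_num)]
  congr 1
  rw [ENNReal.ofReal_inv_of_pos (by norm_num)]
  norm_num

lemma twoinv_pow {s : ℝ} (has : a ^ s = 2⁻¹) (k : ℕ) : ((2:ℝ)⁻¹) ^ k = (a ^ k) ^ s := by
  have h1 : ((2:ℝ)⁻¹) ^ k = (a ^ s) ^ (k:ℝ) := by
    rw [has, Real.rpow_natCast]
  rw [h1, ← Real.rpow_mul ha.le, mul_comm s (k:ℝ), Real.rpow_mul ha.le,
    Real.rpow_natCast]

lemma nu_upper {s : ℝ} (x r : ℝ) (hr0 : 0 < r) (hr1 : r ≤ 1) (hs0 : 0 < s)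
    (has : a ^ s = 2⁻¹) :
    P (hmap a ⁻¹' Icc (x - r) (x + r)) ≤ ENNReal.ofReal ((2/a + 2) * r ^ s) := by
  obtain ⟨k, hk1, hk2⟩ := exists_pow_k ha ha2 r hr0 hr1
  refine le_trans (meas_interval_le ha ha2 x r hr0.le k) ?_
  have hak : (0:ℝ) < a ^ k := pow_pos ha k
  have hcount : ((⌊2*r/a^k⌋₊ : ℝ) + 2) ≤ 2/a + 2 := by
    have h1 : (⌊2*r/a^k⌋₊ : ℝ) ≤ 2*r/a^k := Nat.floor_le (by positivity)
    have h2 : 2*r/a^k ≤ 2/a := by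
      rw [div_le_div_iff₀ hak (by positivity : (0:ℝ) < a)]
      nlinarith
    linarith
  have hpow : ((2:ℝ)⁻¹) ^ k ≤ r ^ s := by
    rw [twoinv_pow ha ha2 has k]
    exact Real.rpow_le_rpow (by positivity) hk1 hs0.le
  have heq : ((⌊2*r/a^k⌋₊ : ℝ≥0∞) + 2) * 2⁻¹ ^ k
      = ENNReal.ofReal (((⌊2*r/a^k⌋₊:ℝ) + 2) * (2⁻¹:ℝ)^k) := by
    rw [ENNReal.ofReal_mul (by positivity), twoinv_pow_ennreal,
      ENNReal.ofReal_add (by positivity) (by norm_num), ENNReal.ofReal_natCast]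
    norm_num
  rw [heq]
  refine ENNReal.ofReal_le_ofReal ?_
  have h2pos : (0:ℝ) ≤ (2⁻¹:ℝ)^k := by positivity
  have hfl : (0:ℝ) ≤ (⌊2*r/a^k⌋₊ : ℝ) + 2 := by positivity
  calc ((⌊2*r/a^k⌋₊:ℝ) + 2) * (2⁻¹:ℝ)^k ≤ (2/a + 2) * r ^ s :=
    mul_le_mul hcount hpow h2pos (by positivity)

lemma nu_lower {s : ℝ} (ω : G) (r : ℝ) (hr0 : 0 < r) (hr1 : r ≤ 1) (hs0 : 0 < s)
    (has : a ^ s = 2⁻¹) :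
    ENNReal.ofReal ((a*r) ^ s) ≤ P (hmap a ⁻¹' Icc (hmap a ω - r) (hmap a ω + r)) := by
  obtain ⟨k, hk1, hk2⟩ := exists_pow_k ha ha2 r hr0 hr1
  refine le_trans ?_ (meas_interval_ge ha ha2 ω k r hk1)
  rw [twoinv_pow_ennreal, twoinv_pow ha ha2 has k]
  exact ENNReal.ofReal_le_ofReal (Real.rpow_le_rpow (by positivity) hk2 hs0.le)

end Csec

section Dsec

variable {a s : ℝ} (ha : 0 < a) (ha2 : a ≤ 1/2)

noncomputable def Pn (n : ℕ) : Measure (Fin n → G) := Measure.pi fun _ => P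

instance (n : ℕ) : IsProbabilityMeasure (Pn n) := by
  unfold Pn; infer_instance

noncomputable def Hmap (a : ℝ) (n : ℕ) (ω : Fin n → G) : EuclideanSpace ℝ (Fin n) :=
  (EuclideanSpace.equiv (Fin n) ℝ).symm (fun i => hmap a (ω i))

lemma Hmap_apply (n : ℕ) (ω : Fin n → G) (i : Fin n) : Hmap a n ω i = hmap a (ω i) := rfl

include ha ha2

lemma continuous_Hmap (n : ℕ) : Continuous (Hmap a n) := by
  refine Continuous.comp (EuclideanSpace.equiv (Fin n) ℝ).symm.continuous ?_
  exact continuous_pi fun i => (continuous_hmap ha ha2).comp (continuous_apply i)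

lemma measurable_Hmap (n : ℕ) : Measurable (Hmap a n) := (continuous_Hmap ha ha2 n).measurable

omit ha ha2

noncomputable def Mu (a : ℝ) (n : ℕ) : Measure (EuclideanSpace ℝ (Fin n)) :=
  (Pn n).map (Hmap a n)

include ha ha2

lemma Mu_prob (n : ℕ) : IsProbabilityMeasure (Mu a n) :=
  Measure.isProbabilityMeasure_map (measurable_Hmap ha ha2 n).aemeasurable

omit ha ha2

def box (n : ℕ) (x : EuclideanSpace ℝ (Fin n)) (r : ℝ) : Set (EuclideanSpace ℝ (Fin n)) :=
  {y | ∀ i, y i ∈ Icc (x i - r) (x i + r)}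

lemma measurable_coord (n : ℕ) (i : Fin n) :
    Measurable fun y : EuclideanSpace ℝ (Fin n) => y i := by
  have : Continuous fun y : EuclideanSpace ℝ (Fin n) => y i :=
    (continuous_apply i).comp (EuclideanSpace.equiv (Fin n) ℝ).continuous
  exact this.measurable

lemma measurableSet_box (n : ℕ) (x : EuclideanSpace ℝ (Fin n)) (r : ℝ) :
    MeasurableSet (box n x r) := by
  have : box n x r = ⋂ i, (fun y : EuclideanSpace ℝ (Fin n) => y i) ⁻¹' Icc (x i - r) (x i + r) := by
    ext y; simp [box]
  rw [this]
  exact MeasurableSet.iInter fun i => (measurable_coord n i) measurableSet_Icc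

include ha ha2

lemma Mu_box (n : ℕ) (x : EuclideanSpace ℝ (Fin n)) (r : ℝ) :
    Mu a n (box n x r) = ∏ i, P (hmap a ⁻¹' Icc (x i - r) (x i + r)) := by
  rw [Mu, Measure.map_apply (measurable_Hmap ha ha2 n) (measurableSet_box n x r)]
  have hpre : Hmap a n ⁻¹' box n x r
      = Set.univ.pi fun i => hmap a ⁻¹' Icc (x i - r) (x i + r) := by
    ext ω
    simp only [mem_preimage, box, mem_setOf_eq, Set.mem_pi, Set.mem_univ, forall_true_left]
    constructor
    · intro h i; exact h i
    · intro h i; exact h i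
  rw [hpre, Pn, Measure.pi_pi]

omit ha ha2 in
lemma coord_dist_le (n : ℕ) (x y : EuclideanSpace ℝ (Fin n)) (i : Fin n) :
    |y i - x i| ≤ dist y x := by
  rw [EuclideanSpace.dist_eq]
  have h1 : |y i - x i| = Real.sqrt (dist (y i) (x i) ^ 2) := by
    rw [Real.sqrt_sq_eq_abs, abs_of_nonneg dist_nonneg, Real.dist_eq]
  rw [h1]
  apply Real.sqrt_le_sqrt
  refine Finset.single_le_sum (f := fun j => dist (y j) (x j) ^ 2) (fun j _ => by positivity)
    (Finset.mem_univ i)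

omit ha ha2 in
lemma closedBall_subset_box (n : ℕ) (x : EuclideanSpace ℝ (Fin n)) (r : ℝ) :
    closedBall x r ⊆ box n x r := by
  intro y hy
  rw [mem_closedBall] at hy
  intro i
  have := coord_dist_le n x y i
  have habs : |y i - x i| ≤ r := le_trans this hy
  rw [abs_le] at habs
  exact ⟨by linarith [habs.1], by linarith [habs.2]⟩

omit ha ha2 in
lemma box_subset_closedBall (n : ℕ) (x : EuclideanSpace ℝ (Fin n)) (ρ : ℝ) (hρ : 0 ≤ ρ) :
    box n x ρ ⊆ closedBall x (Real.sqrt n * ρ) := by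
  intro y hy
  rw [mem_closedBall, EuclideanSpace.dist_eq]
  have hbound : ∑ i, dist (y i) (x i) ^ 2 ≤ (n : ℝ) * ρ ^ 2 := by
    calc ∑ i, dist (y i) (x i) ^ 2 ≤ ∑ _i : Fin n, ρ ^ 2 := by
          refine Finset.sum_le_sum fun i _ => ?_
          have h := hy i
          rw [mem_Icc] at h
          have habs : |y i - x i| ≤ ρ := abs_le.2 ⟨by linarith [h.1], by linarith [h.2]⟩
          rw [Real.dist_eq]
          nlinarith [abs_nonneg (y i - x i), sq_abs (y i - x i)]
      _ = (n : ℝ) * ρ ^ 2 := by rw [Finset.sum_const, Finset.card_univ, Fintype.card_fin,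
            nsmul_eq_mul]
  calc Real.sqrt (∑ i, dist (y i) (x i) ^ 2) ≤ Real.sqrt ((n:ℝ) * ρ ^ 2) :=
        Real.sqrt_le_sqrt hbound
    _ = Real.sqrt n * ρ := by
        rw [Real.sqrt_mul (Nat.cast_nonneg n), Real.sqrt_sq hρ]

lemma Mu_closedBall_le {s : ℝ} (n : ℕ) (x : EuclideanSpace ℝ (Fin n)) (r : ℝ)
    (hr0 : 0 < r) (hr1 : r ≤ 1) (hs0 : 0 < s) (has : a ^ s = 2⁻¹) :
    Mu a n (closedBall x r) ≤ ENNReal.ofReal (((2/a + 2) * r ^ s) ^ n) := by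
  calc Mu a n (closedBall x r) ≤ Mu a n (box n x r) :=
        measure_mono (closedBall_subset_box n x r)
    _ = ∏ i, P (hmap a ⁻¹' Icc (x i - r) (x i + r)) := Mu_box ha ha2 n x r
    _ ≤ ∏ _i : Fin n, ENNReal.ofReal ((2/a + 2) * r ^ s) :=
        Finset.prod_le_prod' fun i _ => nu_upper ha ha2 (x i) r hr0 hr1 hs0 has
    _ = ENNReal.ofReal ((2/a + 2) * r ^ s) ^ n := by
        rw [Finset.prod_const, Finset.card_univ, Fintype.card_fin]
    _ = ENNReal.ofReal (((2/a + 2) * r ^ s) ^ n) := by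
        rw [ENNReal.ofReal_pow]
        positivity

lemma Mu_box_lower {s : ℝ} (n : ℕ) (ω : Fin n → G) (ρ : ℝ)
    (hρ0 : 0 < ρ) (hρ1 : ρ ≤ 1) (hs0 : 0 < s) (has : a ^ s = 2⁻¹) :
    ENNReal.ofReal (((a * ρ) ^ s) ^ n) ≤ Mu a n (box n (Hmap a n ω) ρ) := by
  rw [Mu_box ha ha2 n (Hmap a n ω) ρ]
  calc ENNReal.ofReal (((a * ρ) ^ s) ^ n)
      = ∏ _i : Fin n, ENNReal.ofReal ((a * ρ) ^ s) := by
        rw [Finset.prod_const, Finset.card_univ, Fintype.card_fin, ← ENNReal.ofReal_pow]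
        positivity
    _ ≤ ∏ i, P (hmap a ⁻¹' Icc (Hmap a n ω i - ρ) (Hmap a n ω i + ρ)) := by
        refine Finset.prod_le_prod' fun i _ => ?_
        rw [Hmap_apply]
        exact nu_lower ha ha2 (ω i) ρ hρ0 hρ1 hs0 has

lemma Mu_singleton {s : ℝ} (n : ℕ) (hn : 0 < n) (x : EuclideanSpace ℝ (Fin n))
    (hs0 : 0 < s) (has : a ^ s = 2⁻¹) : Mu a n {x} = 0 := by
  have hkey : ∀ m : ℕ, Mu a n {x} ≤ ENNReal.ofReal (((2/a + 2) * ((1:ℝ)/(m+1)) ^ s) ^ n) := by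
    intro m
    have hr0 : (0:ℝ) < 1/(m+1) := by positivity
    have hr1 : (1:ℝ)/(m+1) ≤ 1 := by
      rw [div_le_one (by positivity)]
      have : (0:ℝ) ≤ (m:ℝ) := Nat.cast_nonneg m
      linarith
    refine le_trans (measure_mono ?_) (Mu_closedBall_le ha ha2 n x _ hr0 hr1 hs0 has)
    intro y hy
    rw [mem_singleton_iff] at hy
    rw [hy, mem_closedBall, dist_self]
    positivity
  have htends : Tendsto (fun m : ℕ => ENNReal.ofReal (((2/a + 2) * ((1:ℝ)/(m+1)) ^ s) ^ n))
      atTop (nhds 0) := by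
    have h1 : Tendsto (fun m : ℕ => (1:ℝ)/(m+1)) atTop (nhds 0) :=
      tendsto_one_div_add_atTop_nhds_zero_nat
    have h2 : ContinuousAt (fun u : ℝ => ENNReal.ofReal (((2/a + 2) * u ^ s) ^ n)) 0 := by
      refine ENNReal.continuous_ofReal.continuousAt.comp ?_
      refine ContinuousAt.pow ?_ n
      refine ContinuousAt.mul continuousAt_const ?_
      exact Real.continuousAt_rpow_const 0 s (Or.inr hs0.le)
    have hcomp := h2.tendsto.comp h1
    have h0 : ENNReal.ofReal (((2/a + 2) * (0:ℝ) ^ s) ^ n) = 0 := by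
      rw [Real.zero_rpow (ne_of_gt hs0), mul_zero, zero_pow (Nat.pos_iff_ne_zero.1 hn),
        ENNReal.ofReal_zero]
    rw [← h0]
    exact hcomp
  exact le_antisymm (le_of_tendsto_of_tendsto' tendsto_const_nhds htends hkey) zero_le

end Dsec

section Fsec

variable {a s : ℝ} (ha : 0 < a) (ha2 : a ≤ 1/2)

include ha ha2

lemma isCompact_range_Hmap (n : ℕ) : IsCompact (range (Hmap a n)) :=
  isCompact_range (continuous_Hmap ha ha2 n)

lemma isClosed_range_Hmap (n : ℕ) : IsClosed (range (Hmap a n)) :=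
  (isCompact_range_Hmap ha ha2 n).isClosed

lemma Mu_range (n : ℕ) : Mu a n (range (Hmap a n)) = 1 := by
  rw [Mu, Measure.map_apply (measurable_Hmap ha ha2 n)
    (isClosed_range_Hmap ha ha2 n).measurableSet]
  have : Hmap a n ⁻¹' range (Hmap a n) = univ :=
    eq_univ_of_forall fun ω => mem_range_self ω
  rw [this]
  exact measure_univ

lemma Mu_compl_range (n : ℕ) : Mu a n (range (Hmap a n))ᶜ = 0 := by
  have h := measure_add_measure_compl (μ := Mu a n)
    (isClosed_range_Hmap ha ha2 n).measurableSet
  have h1 := Mu_range ha ha2 n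
  have h2 : Mu a n univ = 1 := (Mu_prob ha ha2 n).measure_univ
  rw [h1, h2] at h
  have h3 : (1:ℝ≥0∞) + Mu a n (range (Hmap a n))ᶜ = 1 + 0 := by rw [add_zero]; exact h
  exact (ENNReal.add_right_inj (by norm_num)).1 h3

-- exponent bookkeeping helper
omit ha2 in
lemma rpow_pow (u : ℝ) (m : ℕ) : (a ^ u) ^ m = a ^ (u * m) := by
  rw [← Real.rpow_natCast (a ^ u) m, ← Real.rpow_mul ha.le]

lemma cover_sum_eq {s : ℝ} (has : a ^ s = 2⁻¹) (n k : ℕ) (d' : ℝ) :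
    ((2:ℝ) ^ k) ^ n * ((Real.sqrt n * a ^ k) ^ d')
      = (Real.sqrt n) ^ d' * (a ^ (d' - s * n)) ^ k := by
  have h2 : (2:ℝ) = a ^ (-s) := by
    rw [Real.rpow_neg ha.le, has]
    norm_num
  have hak : (0:ℝ) < a ^ k := pow_pos ha k
  have hsq : (0:ℝ) ≤ Real.sqrt n := Real.sqrt_nonneg n
  have e1 : ((2:ℝ) ^ k) ^ n = a ^ (-s * ((k*n:ℕ):ℝ)) := by
    rw [h2, ← pow_mul, rpow_pow ha]
  have e2 : (a ^ k) ^ d' = a ^ ((k:ℝ) * d') := by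
    rw [← Real.rpow_natCast a k, ← Real.rpow_mul ha.le]
  have e4 : (a ^ (d' - s * n)) ^ k = a ^ ((d' - s * n) * (k:ℝ)) := rpow_pow ha _ k
  rw [Real.mul_rpow hsq hak.le, e1, e2, e4]
  rw [show a ^ (-s * ((k*n:ℕ):ℝ)) * (Real.sqrt n ^ d' * a ^ ((k:ℝ) * d'))
      = Real.sqrt n ^ d' * (a ^ (-s * ((k*n:ℕ):ℝ)) * a ^ ((k:ℝ) * d')) from by ring,
    ← Real.rpow_add ha]
  congr 1
  push_cast
  ring

lemma hausdorff_upper {s : ℝ} (has : a ^ s = 2⁻¹) (n : ℕ) {d' : ℝ} (hd' : s * n < d')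
    (hd'0 : 0 ≤ d') :
    μH[d'] (range (Hmap a n)) = 0 := by
  classical
  set Cv : ∀ k : ℕ, (Fin n → (Fin k → ZMod 2)) → Set (EuclideanSpace ℝ (Fin n)) :=
    fun k w => {y | ∀ i, y i ∈ Icc (L a k (extw k (w i))) (L a k (extw k (w i)) + a ^ k)}
    with hCv
  have hak : ∀ k : ℕ, (0:ℝ) < a ^ k := fun k => pow_pos ha k
  have hdiam : ∀ k w, EMetric.diam (Cv k w) ≤ ENNReal.ofReal (Real.sqrt n * a ^ k) := by
    intro k w
    refine EMetric.diam_le fun y hy z hz => ?_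
    rw [edist_dist]
    refine ENNReal.ofReal_le_ofReal ?_
    rw [EuclideanSpace.dist_eq]
    have hbound : ∑ i, dist (y i) (z i) ^ 2 ≤ (n : ℝ) * (a ^ k) ^ 2 := by
      calc ∑ i, dist (y i) (z i) ^ 2 ≤ ∑ _i : Fin n, (a ^ k) ^ 2 := by
            refine Finset.sum_le_sum fun i _ => ?_
            have h1 := hy i
            have h2 := hz i
            rw [mem_Icc] at h1 h2
            rw [Real.dist_eq]
            have habs : |y i - z i| ≤ a ^ k := abs_le.2 ⟨by linarith, by linarith⟩
            nlinarith [abs_nonneg (y i - z i), sq_abs (y i - z i)]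
        _ = (n : ℝ) * (a ^ k) ^ 2 := by
            rw [Finset.sum_const, Finset.card_univ, Fintype.card_fin, nsmul_eq_mul]
    calc Real.sqrt (∑ i, dist (y i) (z i) ^ 2) ≤ Real.sqrt ((n:ℝ) * (a ^ k) ^ 2) :=
          Real.sqrt_le_sqrt hbound
      _ = Real.sqrt n * a ^ k := by
          rw [Real.sqrt_mul (Nat.cast_nonneg n), Real.sqrt_sq (hak k).le]
  have hcover : ∀ k : ℕ, range (Hmap a n) ⊆ ⋃ w, Cv k w := by
    intro k x hx
    obtain ⟨ω, rfl⟩ := hx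
    refine Set.mem_iUnion.2 ⟨fun i => fun j => ω i j.1, fun i => ?_⟩
    have hLeq : L a k (extw k (fun j : Fin k => ω i j.1)) = L a k (ω i) :=
      L_congr k fun j hj => extw_lt k _ hj
    rw [Hmap_apply, hLeq]
    exact hmap_mem ha ha2 (ω i) k
  have hr0 : Tendsto (fun k : ℕ => ENNReal.ofReal (Real.sqrt n * a ^ k)) atTop (nhds 0) := by
    rw [show (0:ℝ≥0∞) = ENNReal.ofReal 0 from (ENNReal.ofReal_zero).symm]
    refine ENNReal.tendsto_ofReal ?_
    rw [show (0:ℝ) = Real.sqrt n * 0 from (mul_zero _).symm]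
    exact (tendsto_pow_atTop_nhds_zero_of_lt_one ha.le (a_lt_one ha ha2)).const_mul _
  have hmain := MeasureTheory.Measure.hausdorffMeasure_le_liminf_sum d' (range (Hmap a n))
    (fun k => ENNReal.ofReal (Real.sqrt n * a ^ k)) hr0 Cv
    (Eventually.of_forall fun k => hdiam k) (Eventually.of_forall hcover)
  refine le_antisymm (le_trans hmain ?_) zero_le
  -- bound the liminf by a sequence tending to zero
  have hsumle : ∀ k : ℕ, (∑ w : Fin n → (Fin k → ZMod 2), EMetric.diam (Cv k w) ^ d')
      ≤ ENNReal.ofReal ((Real.sqrt n) ^ d' * (a ^ (d' - s * n)) ^ k) := by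
    intro k
    calc (∑ w : Fin n → (Fin k → ZMod 2), EMetric.diam (Cv k w) ^ d')
        ≤ ∑ _w : Fin n → (Fin k → ZMod 2), ENNReal.ofReal ((Real.sqrt n * a ^ k) ^ d') := by
          refine Finset.sum_le_sum fun w _ => ?_
          rw [← ENNReal.ofReal_rpow_of_nonneg (by positivity) hd'0]
          exact ENNReal.rpow_le_rpow (hdiam k w) hd'0
      _ = (Fintype.card (Fin n → (Fin k → ZMod 2)) : ℝ≥0∞)
            * ENNReal.ofReal ((Real.sqrt n * a ^ k) ^ d') := by
          rw [Finset.sum_const, Finset.card_univ, nsmul_eq_mul]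
      _ = ENNReal.ofReal (((2:ℝ) ^ k) ^ n * ((Real.sqrt n * a ^ k) ^ d')) := by
          rw [ENNReal.ofReal_mul (by positivity)]
          congr 1
          rw [Fintype.card_fun, Fintype.card_fun, ZMod.card, Fintype.card_fin]
          push_cast
          rw [ENNReal.ofReal_pow (by positivity), ENNReal.ofReal_pow (by norm_num)]
          norm_num
      _ = ENNReal.ofReal ((Real.sqrt n) ^ d' * (a ^ (d' - s * n)) ^ k) := by
          rw [cover_sum_eq ha ha2 has n k d']
  have hgoal : Tendsto (fun k : ℕ =>
      ENNReal.ofReal ((Real.sqrt n) ^ d' * (a ^ (d' - s * n)) ^ k)) atTop (nhds 0) := by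
    rw [show (0:ℝ≥0∞) = ENNReal.ofReal 0 from (ENNReal.ofReal_zero).symm]
    refine ENNReal.tendsto_ofReal ?_
    rw [show (0:ℝ) = (Real.sqrt n) ^ d' * 0 from (mul_zero _).symm]
    refine Tendsto.const_mul _ ?_
    refine tendsto_pow_atTop_nhds_zero_of_lt_one (Real.rpow_nonneg ha.le _) ?_
    exact Real.rpow_lt_one ha.le (a_lt_one ha ha2) (by linarith)
  calc liminf (fun k : ℕ => ∑ w : Fin n → (Fin k → ZMod 2), EMetric.diam (Cv k w) ^ d') atTop
      ≤ liminf (fun k : ℕ =>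
          ENNReal.ofReal ((Real.sqrt n) ^ d' * (a ^ (d' - s * n)) ^ k)) atTop :=
        liminf_le_liminf (Eventually.of_forall hsumle)
    _ = 0 := hgoal.liminf_eq

lemma Mu_set_le {s : ℝ} (hs0 : 0 < s) (has : a ^ s = 2⁻¹) (n : ℕ) (hn : 0 < n)
    (U : Set (EuclideanSpace ℝ (Fin n))) (hdiamU : EMetric.diam U ≤ 1) :
    Mu a n U ≤ ENNReal.ofReal ((2/a + 2) ^ n) * EMetric.diam U ^ (s * (n:ℝ)) := by
  rcases Set.eq_empty_or_nonempty U with rfl | ⟨x, hx⟩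
  · simp
  rcases eq_or_lt_of_le (show (0:ℝ≥0∞) ≤ EMetric.diam U from zero_le) with hzero | hpos
  · have hsing : U.Subsingleton := EMetric.diam_eq_zero_iff.1 hzero.symm
    have hsub : U ⊆ {x} := fun y hy => mem_singleton_iff.2 (hsing hy hx)
    have h0 : Mu a n U = 0 :=
      measure_mono_null hsub (Mu_singleton ha ha2 n hn x hs0 has)
    rw [h0]
    exact zero_le
  · set r := (EMetric.diam U).toReal with hrdef
    have hne : EMetric.diam U ≠ ∞ := ne_top_of_le_ne_top ENNReal.one_ne_top hdiamU
    have hr0 : 0 < r := ENNReal.toReal_pos (ne_of_gt hpos) hne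
    have hr1 : r ≤ 1 := by
      have := ENNReal.toReal_mono ENNReal.one_ne_top hdiamU
      simpa using this
    have hsubB : U ⊆ closedBall x r := by
      intro y hy
      have h1 : edist y x ≤ EMetric.diam U := EMetric.edist_le_diam_of_mem hy hx
      rw [mem_closedBall, dist_edist]
      exact le_trans (ENNReal.toReal_mono hne h1) (le_refl r)
    calc Mu a n U ≤ Mu a n (closedBall x r) := measure_mono hsubB
      _ ≤ ENNReal.ofReal (((2/a + 2) * r ^ s) ^ n) :=
          Mu_closedBall_le ha ha2 n x r hr0 hr1 hs0 has
      _ = ENNReal.ofReal ((2/a+2)^n) * EMetric.diam U ^ (s * (n:ℝ)) := by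
          have h1 : ((2/a + 2) * r ^ s) ^ n = (2/a+2)^n * r ^ (s * (n:ℝ)) := by
            rw [mul_pow]
            congr 1
            rw [← Real.rpow_natCast (r ^ s) n, ← Real.rpow_mul hr0.le]
          rw [h1, ENNReal.ofReal_mul (by positivity)]
          congr 1
          rw [← ENNReal.ofReal_rpow_of_pos hr0]
          congr 1
          rw [hrdef, ENNReal.ofReal_toReal hne]

lemma hausdorff_lower {s : ℝ} (hs0 : 0 < s) (has : a ^ s = 2⁻¹) (n : ℕ) (hn : 0 < n) :
    (ENNReal.ofReal ((2/a + 2) ^ n))⁻¹ ≤ μH[(s * (n:ℝ))] (range (Hmap a n)) := by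
  set C := ENNReal.ofReal ((2/a + 2) ^ n) with hC
  have hC0 : C ≠ 0 := by
    rw [hC, Ne, ENNReal.ofReal_eq_zero, not_le]
    positivity
  have hCt : C ≠ ∞ := ENNReal.ofReal_ne_top
  rw [MeasureTheory.Measure.hausdorffMeasure_apply]
  refine le_iSup₂_of_le 1 zero_lt_one ?_
  refine le_iInf fun t => le_iInf fun hst => le_iInf fun hd => ?_
  have hone : (1:ℝ≥0∞) ≤ C * ∑' m, ⨆ _ : (t m).Nonempty, EMetric.diam (t m) ^ (s*(n:ℝ)) := by
    have h1 : (1:ℝ≥0∞) = Mu a n (range (Hmap a n)) := (Mu_range ha ha2 n).symm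
    rw [h1]
    calc Mu a n (range (Hmap a n)) ≤ Mu a n (⋃ m, t m) := measure_mono hst
      _ ≤ ∑' m, Mu a n (t m) := measure_iUnion_le t
      _ ≤ ∑' m, C * ⨆ _ : (t m).Nonempty, EMetric.diam (t m) ^ (s*(n:ℝ)) := by
          refine ENNReal.tsum_le_tsum fun m => ?_
          rcases Set.eq_empty_or_nonempty (t m) with he | hne
          · rw [he]; simp
          · rw [iSup_pos hne]
            exact Mu_set_le ha ha2 hs0 has n hn (t m) (hd m)
      _ = C * ∑' m, ⨆ _ : (t m).Nonempty, EMetric.diam (t m) ^ (s*(n:ℝ)) :=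
          ENNReal.tsum_mul_left
  calc C⁻¹ = C⁻¹ * 1 := (mul_one _).symm
    _ ≤ C⁻¹ * (C * ∑' m, ⨆ _ : (t m).Nonempty, EMetric.diam (t m) ^ (s*(n:ℝ))) :=
        mul_le_mul_right hone _
    _ = ∑' m, ⨆ _ : (t m).Nonempty, EMetric.diam (t m) ^ (s*(n:ℝ)) := by
        rw [← mul_assoc, ENNReal.inv_mul_cancel hC0 hCt, one_mul]

lemma dimH_range_Hmap {s : ℝ} (hs0 : 0 < s) (has : a ^ s = 2⁻¹) (n : ℕ) (hn : 0 < n) :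
    dimH (range (Hmap a n)) = ENNReal.ofReal (s * n) := by
  have hsn0 : (0:ℝ) ≤ s * n := by positivity
  refine le_antisymm ?_ ?_
  · refine dimH_le fun d' hd' => ?_
    by_contra hgt
    push_neg at hgt
    have hlt : s * (n:ℝ) < (d' : ℝ) := by
      rw [show ENNReal.ofReal (s * (n:ℝ)) = ((s * (n:ℝ)).toNNReal : ℝ≥0∞) from rfl,
        ENNReal.coe_lt_coe] at hgt
      calc s * (n:ℝ) = ((s * (n:ℝ)).toNNReal : ℝ) := (Real.coe_toNNReal _ hsn0).symm
        _ < (d' : ℝ) := hgt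
    have h0 := hausdorff_upper ha ha2 has n hlt d'.coe_nonneg
    rw [h0] at hd'
    exact ENNReal.zero_ne_top hd'
  · have hmeas := hausdorff_lower ha ha2 hs0 has n hn
    have hne : μH[(s*(n:ℝ))] (range (Hmap a n)) ≠ 0 := by
      intro h0
      rw [h0, le_zero_iff, ENNReal.inv_eq_zero] at hmeas
      exact ENNReal.ofReal_ne_top hmeas
    have hcoe : ((s * (n:ℝ)).toNNReal : ℝ) = s * (n:ℝ) := Real.coe_toNNReal _ hsn0
    have := le_dimH_of_hausdorffMeasure_ne_zero (d := (s * (n:ℝ)).toNNReal)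
      (by rw [hcoe]; exact hne)
    exact this

end Fsec

section Hsec

noncomputable def heatK0 (n : ℕ) (x : EuclideanSpace ℝ (Fin n)) (t : ℝ) : ℝ :=
  (4 * Real.pi * t) ^ (-(n : ℝ) / 2) * Real.exp (-‖x‖ ^ 2 / (4 * t))

lemma heatK0_ge (n : ℕ) {z : EuclideanSpace ℝ (Fin n)} {t : ℝ} (ht : 0 < t)
    (hz : ‖z‖^2 ≤ t) :
    (4*Real.pi*t) ^ (-(n:ℝ)/2) * Real.exp (-(4:ℝ)⁻¹) ≤ heatK0 n z t := by
  have hπ : (0:ℝ) < 4*Real.pi*t := by positivity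
  refine mul_le_mul_of_nonneg_left ?_ (Real.rpow_nonneg hπ.le _)
  refine Real.exp_le_exp.2 ?_
  have h4t : (0:ℝ) < 4*t := by linarith
  have h1 : ‖z‖^2 / (4*t) ≤ 4⁻¹ := by
    rw [div_le_iff₀ h4t]
    nlinarith
  have h2 : -‖z‖^2 / (4*t) = -(‖z‖^2 / (4*t)) := by ring
  rw [h2]
  linarith

lemma heatK0_le (n : ℕ) {z : EuclideanSpace ℝ (Fin n)} {t δ : ℝ} (ht : 0 < t)
    (hδ : 0 ≤ δ) (hz : δ ≤ ‖z‖) :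
    heatK0 n z t ≤ (4*Real.pi*t) ^ (-(n:ℝ)/2) * Real.exp (-δ^2/(4*t)) := by
  have hπ : (0:ℝ) < 4*Real.pi*t := by positivity
  refine mul_le_mul_of_nonneg_left ?_ (Real.rpow_nonneg hπ.le _)
  refine Real.exp_le_exp.2 ?_
  have h4t : (0:ℝ) < 4*t := by linarith
  have hzz : δ^2 ≤ ‖z‖^2 := by nlinarith
  have h2 : -‖z‖^2 / (4*t) = -(‖z‖^2 / (4*t)) := by ring
  have h3 : -δ^2 / (4*t) = -(δ^2 / (4*t)) := by ring
  rw [h2, h3]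
  have h4 : δ^2/(4*t) ≤ ‖z‖^2/(4*t) := by gcongr
  linarith

lemma pow_div_le_exp (x : ℝ) (hx : 0 ≤ x) (m : ℕ) : x^m / (m.factorial : ℝ) ≤ Real.exp x := by
  refine le_trans ?_ (Real.sum_le_exp_of_nonneg hx (m+1))
  refine Finset.single_le_sum (f := fun i => x^i / (i.factorial : ℝ)) ?_ ?_
  · intro i _
    positivity
  · exact Finset.mem_range.2 (Nat.lt_succ_self m)

lemma heat_decay (n : ℕ) (hn : 0 < n) (α δ : ℝ) (hα : 0 ≤ α) (hδ : 0 < δ) :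
    Tendsto (fun t : ℝ => t ^ (α/2) * ((4*Real.pi*t) ^ (-(n:ℝ)/2) * Real.exp (-δ^2/(4*t))))
      (nhdsWithin 0 (Ioi 0)) (nhds 0) := by
  have hπ : (0:ℝ) < 4*Real.pi := by positivity
  set C : ℝ := (4*Real.pi) ^ (-(n:ℝ)/2) * ((n.factorial:ℝ) * (4/δ^2)^n) with hC
  have hbd : ∀ t : ℝ, 0 < t →
      t ^ (α/2) * ((4*Real.pi*t) ^ (-(n:ℝ)/2) * Real.exp (-δ^2/(4*t)))
        ≤ C * t ^ ((α+(n:ℝ))/2) := by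
    intro t ht0
    have hexp : Real.exp (-δ^2/(4*t)) ≤ (n.factorial:ℝ) * ((4/δ^2)^n * t^n) := by
      have hx : (0:ℝ) ≤ δ^2/(4*t) := by positivity
      have h1 := pow_div_le_exp (δ^2/(4*t)) hx n
      have hpos : (0:ℝ) < (δ^2/(4*t))^n / (n.factorial:ℝ) := by positivity
      have h2 : Real.exp (-δ^2/(4*t)) = (Real.exp (δ^2/(4*t)))⁻¹ := by
        rw [← Real.exp_neg]
        congr 1
        ring
      rw [h2]
      have h3 : (Real.exp (δ^2/(4*t)))⁻¹ ≤ ((δ^2/(4*t))^n / (n.factorial:ℝ))⁻¹ :=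
        inv_anti₀ hpos h1
      refine le_trans h3 (le_of_eq ?_)
      have hδ2 : δ^2 ≠ 0 := by positivity
      have h4t : (4:ℝ)*t ≠ 0 := by positivity
      have hfac : (n.factorial:ℝ) ≠ 0 := by positivity
      rw [inv_div, div_eq_mul_inv (n.factorial:ℝ), ← inv_pow, inv_div, ← mul_pow]
      congr 2
      ring
    have e4 : (4*Real.pi*t) ^ (-(n:ℝ)/2) = (4*Real.pi) ^ (-(n:ℝ)/2) * t ^ (-(n:ℝ)/2) :=
      Real.mul_rpow hπ.le ht0.le
    have e5 : t ^ (α/2) * t ^ (-(n:ℝ)/2) * t ^ ((n:ℕ):ℝ) = t ^ ((α+(n:ℝ))/2) := by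
      rw [← Real.rpow_add ht0, ← Real.rpow_add ht0]
      congr 1
      push_cast
      ring
    calc t ^ (α/2) * ((4*Real.pi*t) ^ (-(n:ℝ)/2) * Real.exp (-δ^2/(4*t)))
        ≤ t ^ (α/2) * ((4*Real.pi) ^ (-(n:ℝ)/2) * t ^ (-(n:ℝ)/2)
            * ((n.factorial:ℝ) * ((4/δ^2)^n * t^n))) := by
          rw [e4]
          refine mul_le_mul_of_nonneg_left ?_ (Real.rpow_nonneg ht0.le _)
          exact mul_le_mul_of_nonneg_left hexp (by positivity)
      _ = C * t ^ ((α+(n:ℝ))/2) := by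
          rw [← Real.rpow_natCast t n] at *
          rw [hC]
          linear_combination ((4*Real.pi) ^ (-(n:ℝ)/2) * ((n.factorial:ℝ) * (4/δ^2)^n)) * e5
  have htends : Tendsto (fun t : ℝ => C * t ^ ((α+(n:ℝ))/2)) (nhdsWithin 0 (Ioi 0)) (nhds 0) := by
    have hepos : (0:ℝ) < (α+(n:ℝ))/2 := by
      have : (0:ℝ) < n := Nat.cast_pos.2 hn
      linarith
    have h := (Real.continuousAt_rpow_const 0 ((α+(n:ℝ))/2) (Or.inr hepos.le)).tendsto
    rw [Real.zero_rpow (ne_of_gt hepos)] at h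
    have h2 : Tendsto (fun t : ℝ => C * t ^ ((α+(n:ℝ))/2)) (nhdsWithin (0:ℝ) (Ioi 0))
        (nhds (C * 0)) := Tendsto.const_mul C (h.mono_left nhdsWithin_le_nhds)
    simpa using h2
  refine squeeze_zero' ?_ ?_ htends
  · filter_upwards [self_mem_nhdsWithin] with t ht
    have ht0 : 0 < t := ht
    positivity
  · filter_upwards [self_mem_nhdsWithin] with t ht
    exact hbd t ht

lemma magic (n : ℕ) (hn : 0 < n) {a s d α t : ℝ} (ha : 0 < a) (hsn : s * n = d)
    (hdα : d = n - α) (ht0 : 0 < t) :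
    t ^ (α/2) * ((4*Real.pi*t) ^ (-(n:ℝ)/2) * Real.exp (-(4:ℝ)⁻¹)
        * ((a * (Real.sqrt t / Real.sqrt n)) ^ s) ^ n)
      = (4*Real.pi) ^ (-(n:ℝ)/2) * Real.exp (-(4:ℝ)⁻¹) * (a / Real.sqrt n) ^ d := by
  have hπ : (0:ℝ) < 4*Real.pi := by positivity
  have hnR : (0:ℝ) < n := Nat.cast_pos.2 hn
  have hsqn : 0 < Real.sqrt n := Real.sqrt_pos.2 hnR
  have hsqt : 0 < Real.sqrt t := Real.sqrt_pos.2 ht0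
  have hbase : 0 < a * (Real.sqrt t / Real.sqrt n) := by positivity
  have e1 : ((a * (Real.sqrt t / Real.sqrt n)) ^ s) ^ n
      = (a * (Real.sqrt t / Real.sqrt n)) ^ d := by
    rw [← Real.rpow_natCast ((a * (Real.sqrt t / Real.sqrt n)) ^ s) n,
      ← Real.rpow_mul hbase.le, hsn]
  have e2 : (a * (Real.sqrt t / Real.sqrt n)) ^ d = (a / Real.sqrt n) ^ d * Real.sqrt t ^ d := by
    rw [← Real.mul_rpow (by positivity) hsqt.le]
    congr 1
    field_simp
  have e3 : Real.sqrt t ^ d = t ^ (d/2) := by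
    rw [Real.sqrt_eq_rpow, ← Real.rpow_mul ht0.le]
    congr 1
    ring
  have e4 : (4*Real.pi*t) ^ (-(n:ℝ)/2) = (4*Real.pi) ^ (-(n:ℝ)/2) * t ^ (-(n:ℝ)/2) :=
    Real.mul_rpow hπ.le ht0.le
  have e5 : t ^ (α/2) * t ^ (-(n:ℝ)/2) * t ^ (d/2) = 1 := by
    rw [← Real.rpow_add ht0, ← Real.rpow_add ht0,
      show α/2 + -(n:ℝ)/2 + d/2 = 0 by rw [hdα]; ring]
    exact Real.rpow_zero t
  rw [e1, e2, e3, e4]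
  linear_combination ((4*Real.pi) ^ (-(n:ℝ)/2) * Real.exp (-(4:ℝ)⁻¹) * (a/Real.sqrt n) ^ d) * e5

end Hsec

end S12

theorem stmt12 (n : ℕ) (α : ℝ) (hα : α ∈ Ico (0 : ℝ) n) :
    ∃ μ : Measure (EuclideanSpace ℝ (Fin n)), IsFiniteMeasure μ ∧
      dimH {x : EuclideanSpace ℝ (Fin n) |
          0 < limsup (fun t : ℝ =>
              ENNReal.ofReal (t ^ (α / 2)) *
                ∫⁻ ξ, ENNReal.ofReal (heatK n (x - ξ) t) ∂μ)
            (nhdsWithin 0 (Ioi 0))} = ENNReal.ofReal ((n : ℝ) - α) := by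
  classical
  obtain ⟨hα0, hαn⟩ := hα
  have hn : 0 < n := by
    rcases Nat.eq_zero_or_pos n with h0 | h
    · subst h0; norm_num at hαn; linarith
    · exact h
  have hnR : (0:ℝ) < n := Nat.cast_pos.2 hn
  set d : ℝ := (n:ℝ) - α with hd
  have hd0 : 0 < d := by rw [hd]; linarith
  set s : ℝ := d / n with hs
  have hs0 : 0 < s := div_pos hd0 hnR
  have hsn : s * n = d := by rw [hs]; field_simp
  set a : ℝ := (2:ℝ) ^ (-(1/s)) with haa
  have ha : 0 < a := Real.rpow_pos_of_pos (by norm_num) _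
  have has : a ^ s = 2⁻¹ := by
    rw [haa, ← Real.rpow_mul (by norm_num : (0:ℝ) ≤ 2),
      show -(1/s) * s = -1 by field_simp, Real.rpow_neg_one]
  have ha2 : a ≤ 1/2 := by
    have h1 : ((2:ℝ)) ^ (-(1:ℝ)) = 1/2 := by
      rw [Real.rpow_neg_one]; norm_num
    rw [haa, ← h1]
    refine Real.rpow_le_rpow_of_exponent_le (by norm_num) ?_
    have hs1 : s ≤ 1 := by
      rw [hs, div_le_one hnR, hd]; linarith
    have h2 : 1 ≤ 1/s := by rw [le_div_iff₀ hs0]; linarith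
    linarith
  haveI hprob : IsProbabilityMeasure (S12.Mu a n) := S12.Mu_prob ha ha2 n
  refine ⟨S12.Mu a n, inferInstance, ?_⟩
  have hKK : ∀ (z : EuclideanSpace ℝ (Fin n)) (t : ℝ), heatK n z t = S12.heatK0 n z t :=
    fun z t => rfl
  have hTeq : {x : EuclideanSpace ℝ (Fin n) |
      0 < limsup (fun t : ℝ => ENNReal.ofReal (t ^ (α / 2)) *
        ∫⁻ ξ, ENNReal.ofReal (heatK n (x - ξ) t) ∂(S12.Mu a n)) (nhdsWithin 0 (Ioi 0))}
      = range (S12.Hmap a n) := by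
    ext x
    simp only [mem_setOf_eq]
    constructor
    · intro hx
      by_contra hxK
      set K := range (S12.Hmap a n) with hK
      have hKc : IsClosed K := S12.isClosed_range_Hmap ha ha2 n
      have hKne : K.Nonempty := ⟨_, mem_range_self (fun _ => (0 : S12.G))⟩
      have hδpos : 0 < infDist x K := (hKc.notMem_iff_infDist_pos hKne).1 hxK
      set δ := infDist x K with hδ
      have hub : ∀ᶠ t in nhdsWithin (0:ℝ) (Ioi 0),
          ENNReal.ofReal (t ^ (α / 2)) *
              ∫⁻ ξ, ENNReal.ofReal (heatK n (x - ξ) t) ∂(S12.Mu a n)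
            ≤ ENNReal.ofReal (t ^ (α/2) * ((4*Real.pi*t) ^ (-(n:ℝ)/2)
                * Real.exp (-δ^2/(4*t)))) := by
        filter_upwards [self_mem_nhdsWithin] with t ht
        have ht0 : (0:ℝ) < t := ht
        have hae : ∀ᵐ ξ ∂(S12.Mu a n), ξ ∈ K := by
          rw [MeasureTheory.ae_iff]
          have h1 : {ξ : EuclideanSpace ℝ (Fin n) | ¬ ξ ∈ K} = Kᶜ := rfl
          rw [h1]
          exact S12.Mu_compl_range ha ha2 n
        have hmono : ∀ᵐ ξ ∂(S12.Mu a n), ENNReal.ofReal (heatK n (x - ξ) t)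
            ≤ ENNReal.ofReal ((4*Real.pi*t) ^ (-(n:ℝ)/2) * Real.exp (-δ^2/(4*t))) := by
          filter_upwards [hae] with ξ hξ
          refine ENNReal.ofReal_le_ofReal ?_
          rw [hKK]
          refine S12.heatK0_le n ht0 hδpos.le ?_
          rw [show ‖x - ξ‖ = dist x ξ from (dist_eq_norm x ξ).symm]
          exact infDist_le_dist_of_mem hξ
        have hint : ∫⁻ ξ, ENNReal.ofReal (heatK n (x - ξ) t) ∂(S12.Mu a n)
            ≤ ENNReal.ofReal ((4*Real.pi*t) ^ (-(n:ℝ)/2) * Real.exp (-δ^2/(4*t))) := by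
          calc ∫⁻ ξ, ENNReal.ofReal (heatK n (x - ξ) t) ∂(S12.Mu a n)
              ≤ ∫⁻ _, ENNReal.ofReal ((4*Real.pi*t) ^ (-(n:ℝ)/2)
                  * Real.exp (-δ^2/(4*t))) ∂(S12.Mu a n) := lintegral_mono_ae hmono
            _ = ENNReal.ofReal ((4*Real.pi*t) ^ (-(n:ℝ)/2) * Real.exp (-δ^2/(4*t))) := by
                rw [lintegral_const, measure_univ, mul_one]
        calc ENNReal.ofReal (t ^ (α / 2)) *
              ∫⁻ ξ, ENNReal.ofReal (heatK n (x - ξ) t) ∂(S12.Mu a n)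
            ≤ ENNReal.ofReal (t ^ (α / 2)) * ENNReal.ofReal ((4*Real.pi*t) ^ (-(n:ℝ)/2)
                * Real.exp (-δ^2/(4*t))) := mul_le_mul_right hint _
          _ = ENNReal.ofReal (t ^ (α/2) * ((4*Real.pi*t) ^ (-(n:ℝ)/2)
                * Real.exp (-δ^2/(4*t)))) :=
              (ENNReal.ofReal_mul (Real.rpow_nonneg ht0.le _)).symm
      have hlim0 : Tendsto (fun t : ℝ => ENNReal.ofReal (t ^ (α/2)
          * ((4*Real.pi*t) ^ (-(n:ℝ)/2) * Real.exp (-δ^2/(4*t)))))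
          (nhdsWithin (0:ℝ) (Ioi 0)) (nhds 0) := by
        rw [show (0:ℝ≥0∞) = ENNReal.ofReal 0 from ENNReal.ofReal_zero.symm]
        exact ENNReal.tendsto_ofReal (S12.heat_decay n hn α δ hα0 hδpos)
      have hlimsup : limsup (fun t : ℝ => ENNReal.ofReal (t ^ (α / 2)) *
          ∫⁻ ξ, ENNReal.ofReal (heatK n (x - ξ) t) ∂(S12.Mu a n)) (nhdsWithin 0 (Ioi 0)) ≤ 0 := by
        calc limsup (fun t : ℝ => ENNReal.ofReal (t ^ (α / 2)) *
              ∫⁻ ξ, ENNReal.ofReal (heatK n (x - ξ) t) ∂(S12.Mu a n)) (nhdsWithin 0 (Ioi 0))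
            ≤ limsup (fun t : ℝ => ENNReal.ofReal (t ^ (α/2)
              * ((4*Real.pi*t) ^ (-(n:ℝ)/2) * Real.exp (-δ^2/(4*t)))))
              (nhdsWithin (0:ℝ) (Ioi 0)) := limsup_le_limsup hub
          _ = 0 := hlim0.limsup_eq
      rw [le_zero_iff] at hlimsup
      rw [hlimsup] at hx
      exact lt_irrefl 0 hx
    · rintro ⟨ω, rfl⟩
      set c₀ : ℝ := (4*Real.pi) ^ (-(n:ℝ)/2) * Real.exp (-(4:ℝ)⁻¹)
          * (a / Real.sqrt n) ^ d with hc₀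
      have hsqn : 0 < Real.sqrt n := Real.sqrt_pos.2 hnR
      have hc₀pos : 0 < c₀ := by
        rw [hc₀]
        have h1 : (0:ℝ) < (4*Real.pi) ^ (-(n:ℝ)/2) := Real.rpow_pos_of_pos (by positivity) _
        have h2 : (0:ℝ) < (a / Real.sqrt n) ^ d := Real.rpow_pos_of_pos (by positivity) _
        positivity
      have hlow : ∀ t : ℝ, t ∈ Ioo (0:ℝ) 1 → ENNReal.ofReal c₀
          ≤ ENNReal.ofReal (t ^ (α / 2)) *
            ∫⁻ ξ, ENNReal.ofReal (heatK n (S12.Hmap a n ω - ξ) t) ∂(S12.Mu a n) := by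
        intro t ht
        obtain ⟨ht0, ht1⟩ := ht
        have hsqt : 0 < Real.sqrt t := Real.sqrt_pos.2 ht0
        have hρ0 : 0 < Real.sqrt t / Real.sqrt n := div_pos hsqt hsqn
        have hρ1 : Real.sqrt t / Real.sqrt n ≤ 1 := by
          rw [div_le_one hsqn]
          have h1 : Real.sqrt t ≤ 1 := by
            rw [show (1:ℝ) = Real.sqrt 1 from Real.sqrt_one.symm]
            exact Real.sqrt_le_sqrt ht1.le
          have h2 : (1:ℝ) ≤ Real.sqrt n := by
            rw [show (1:ℝ) = Real.sqrt 1 from Real.sqrt_one.symm]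
            exact Real.sqrt_le_sqrt (by exact_mod_cast hn)
          linarith
        have hboxball : S12.box n (S12.Hmap a n ω) (Real.sqrt t / Real.sqrt n)
            ⊆ closedBall (S12.Hmap a n ω) (Real.sqrt t) := by
          have hsub := S12.box_subset_closedBall n (S12.Hmap a n ω)
            (Real.sqrt t / Real.sqrt n) hρ0.le
          rw [show Real.sqrt (n:ℝ) * (Real.sqrt t / Real.sqrt n) = Real.sqrt t from by
            field_simp] at hsub
          exact hsub
        have hmuball : ENNReal.ofReal (((a * (Real.sqrt t / Real.sqrt n)) ^ s) ^ n)
            ≤ S12.Mu a n (closedBall (S12.Hmap a n ω) (Real.sqrt t)) :=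
          le_trans (S12.Mu_box_lower ha ha2 n ω (Real.sqrt t / Real.sqrt n) hρ0 hρ1 hs0 has)
            (measure_mono hboxball)
        have hker : ∀ ξ, ξ ∈ closedBall (S12.Hmap a n ω) (Real.sqrt t) →
            ENNReal.ofReal ((4*Real.pi*t) ^ (-(n:ℝ)/2) * Real.exp (-(4:ℝ)⁻¹))
              ≤ ENNReal.ofReal (heatK n (S12.Hmap a n ω - ξ) t) := by
          intro ξ hξ
          refine ENNReal.ofReal_le_ofReal ?_
          rw [hKK]
          refine S12.heatK0_ge n ht0 ?_
          have h1 : ‖S12.Hmap a n ω - ξ‖ ≤ Real.sqrt t := by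
            rw [show ‖S12.Hmap a n ω - ξ‖ = dist ξ (S12.Hmap a n ω) from by
              rw [dist_eq_norm, norm_sub_rev]]
            exact mem_closedBall.1 hξ
          calc ‖S12.Hmap a n ω - ξ‖^2 ≤ (Real.sqrt t)^2 := by
                nlinarith [norm_nonneg (S12.Hmap a n ω - ξ)]
            _ = t := Real.sq_sqrt ht0.le
        have hint : ENNReal.ofReal ((4*Real.pi*t) ^ (-(n:ℝ)/2) * Real.exp (-(4:ℝ)⁻¹))
            * S12.Mu a n (closedBall (S12.Hmap a n ω) (Real.sqrt t))
            ≤ ∫⁻ ξ, ENNReal.ofReal (heatK n (S12.Hmap a n ω - ξ) t) ∂(S12.Mu a n) := by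
          rw [← lintegral_indicator_const measurableSet_closedBall]
          refine lintegral_mono fun ξ => ?_
          by_cases hmem : ξ ∈ closedBall (S12.Hmap a n ω) (Real.sqrt t)
          · rw [Set.indicator_of_mem hmem]
            exact hker ξ hmem
          · rw [Set.indicator_of_notMem hmem]
            exact zero_le
        calc ENNReal.ofReal c₀
            = ENNReal.ofReal (t ^ (α/2) * ((4*Real.pi*t) ^ (-(n:ℝ)/2) * Real.exp (-(4:ℝ)⁻¹)
                * ((a * (Real.sqrt t / Real.sqrt n)) ^ s) ^ n)) := by
              rw [S12.magic n hn ha hsn hd ht0, hc₀]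
          _ = ENNReal.ofReal (t ^ (α/2)) * (ENNReal.ofReal ((4*Real.pi*t) ^ (-(n:ℝ)/2)
                * Real.exp (-(4:ℝ)⁻¹))
                * ENNReal.ofReal (((a * (Real.sqrt t / Real.sqrt n)) ^ s) ^ n)) := by
              rw [ENNReal.ofReal_mul (Real.rpow_nonneg ht0.le _),
                ENNReal.ofReal_mul (show (0:ℝ) ≤ (4*Real.pi*t) ^ (-(n:ℝ)/2)
                  * Real.exp (-(4:ℝ)⁻¹) from by positivity)]
          _ ≤ ENNReal.ofReal (t ^ (α/2)) * (ENNReal.ofReal ((4*Real.pi*t) ^ (-(n:ℝ)/2)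
                * Real.exp (-(4:ℝ)⁻¹))
                * S12.Mu a n (closedBall (S12.Hmap a n ω) (Real.sqrt t))) :=
              mul_le_mul_right (mul_le_mul_right hmuball _) _
          _ ≤ ENNReal.ofReal (t ^ (α/2)) *
              ∫⁻ ξ, ENNReal.ofReal (heatK n (S12.Hmap a n ω - ξ) t) ∂(S12.Mu a n) :=
              mul_le_mul_right hint _
      have hfreq : ∃ᶠ t in nhdsWithin (0:ℝ) (Ioi 0), ENNReal.ofReal c₀
          ≤ ENNReal.ofReal (t ^ (α / 2)) *
            ∫⁻ ξ, ENNReal.ofReal (heatK n (S12.Hmap a n ω - ξ) t) ∂(S12.Mu a n) := by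
        refine Eventually.frequently ?_
        filter_upwards [Ioo_mem_nhdsGT_of_mem
          (show (0:ℝ) ∈ Ico (0:ℝ) 1 by constructor <;> norm_num)] with t ht
        exact hlow t ht
      have hle := le_limsup_of_frequently_le' hfreq
      exact lt_of_lt_of_le (ENNReal.ofReal_pos.2 hc₀pos) hle
  rw [hTeq, S12.dimH_range_Hmap ha ha2 hs0 has n hn, hsn]
end

section
/- Let α ∈ (0,n), k ∈ ℕ, and let μ be a Radon measure on ℝⁿ with finite heat extension u. Set S^k = { x ∈ B(0,R) : limsup_{t→0⁺} t^{α/2} u(x,t) > k } for fixed R > 0. Then H^{n-α}(S^k) ≤ C(α,n) · μ(B(0,R+1)) / k, where C(α,n) depends only on α and n. -/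
open MeasureTheory Filter Metric Set ENNReal Topology

noncomputable def auxS (n : ℕ) : ℝ :=
  ∑' j : ℕ, ((j : ℝ) + 1) ^ n * Real.exp (-(1:ℝ)/4) ^ j

lemma auxS_summable (n : ℕ) :
    Summable (fun j : ℕ => ((j : ℝ) + 1) ^ n * Real.exp (-(1:ℝ)/4) ^ j) := by
  have hr : ‖Real.exp (-(1:ℝ)/4)‖ < 1 := by
    rw [Real.norm_eq_abs, abs_of_pos (Real.exp_pos _)]
    exact Real.exp_lt_one_iff.mpr (by norm_num)
  have h := summable_pow_mul_geometric_of_norm_lt_one (R := ℝ) n hr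
  have h2 := (h.comp_injective (add_left_injective 1)).mul_left
      (Real.exp (-(1:ℝ)/4))⁻¹
  refine h2.congr fun j => ?_
  have : Real.exp (-(1:ℝ)/4) ≠ 0 := (Real.exp_pos _).ne'
  simp only [Function.comp]
  push_cast
  field_simp
  ring

lemma auxS_nonneg (n : ℕ) : 0 ≤ auxS n :=
  tsum_nonneg fun j => by positivity

set_option maxHeartbeats 2000000 in
lemma density_lemma (n : ℕ) (α : ℝ) (hα : α ∈ Ioo (0:ℝ) n) :
    ∃ c : ℝ, 0 < c ∧
      ∀ (μ : Measure (EuclideanSpace ℝ (Fin n))) (x : EuclideanSpace ℝ (Fin n)),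
        (∫⁻ ξ, ENNReal.ofReal (heatK n (x - ξ) 1) ∂μ) ≠ ⊤ →
        ∀ k : ℕ, 0 < k →
        (k : ℝ≥0∞) < limsup (fun t : ℝ =>
            ENNReal.ofReal (t ^ (α / 2)) *
              ∫⁻ ξ, ENNReal.ofReal (heatK n (x - ξ) t) ∂μ) (nhdsWithin 0 (Ioi 0)) →
        ∀ δ : ℝ, 0 < δ → δ ≤ 1 →
        ∃ r : ℝ, 0 < r ∧ r ≤ δ ∧
          ENNReal.ofReal (((4*Real.pi) ^ ((n:ℝ)/2) / (2*(auxS n+1))) * k * r ^ ((n:ℝ) - α))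
            < μ (ball x r) := by
  obtain ⟨hα0, hαn⟩ := hα
  set d : ℝ := (n:ℝ) - α with hd_def
  have hd : 0 < d := sub_pos.mpr hαn
  have hπ : (0:ℝ) < 4 * Real.pi := by positivity
  have hS0 : 0 ≤ auxS n := auxS_nonneg n
  set S : ℝ := auxS n with hS_def
  set c : ℝ := (4*Real.pi) ^ ((n:ℝ)/2) / (2*(S+1)) with hc_def
  have hc0 : 0 < c := by positivity
  refine ⟨c, hc0, ?_⟩
  intro μ x hU1 k hk hlim δ hδ0 hδ1
  by_contra hcon
  push_neg at hcon
  -- hcon : ∀ r, 0 < r → r ≤ δ → μ (ball x r) ≤ ofReal (c*k*r^d)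
  refine absurd hlim (not_lt.2 (Filter.limsup_le_of_le (by isBoundedDefault) ?_))
  have hk0 : ((k:ℝ≥0∞)) ≠ 0 := Nat.cast_ne_zero.mpr hk.ne'
  have hhalf : (0:ℝ≥0∞) < (k:ℝ≥0∞)/2 := ENNReal.div_pos hk0 (by norm_num)
  set U1 : ℝ≥0∞ := ∫⁻ ξ, ENNReal.ofReal (heatK n (x - ξ) 1) ∂μ with hU1_def
  set g : ℝ → ℝ := fun t => t ^ (-(d/2)) * Real.exp (-(δ^2/4) * t⁻¹) * Real.exp (δ^2/4)
    with hg_def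
  have hg0 : ∀ t : ℝ, 0 < t → 0 ≤ g t := fun t ht => by
    have : 0 ≤ t ^ (-(d/2)) := Real.rpow_nonneg ht.le _
    rw [hg_def]
    positivity
  -- Tail tendsto 0
  have htail0 : Tendsto (fun t : ℝ => ENNReal.ofReal (g t) * U1) (𝓝[>] (0:ℝ)) (𝓝 0) := by
    have h1 : Tendsto (fun s : ℝ => s ^ (d/2) * Real.exp (-(δ^2/4) * s)) atTop (𝓝 0) :=
      tendsto_rpow_mul_exp_neg_mul_atTop_nhds_zero _ _ (by positivity)
    have h2 := (h1.mul_const (Real.exp (δ^2/4))).comp tendsto_inv_nhdsGT_zero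
    rw [zero_mul] at h2
    have h3 : Tendsto g (𝓝[>] (0:ℝ)) (𝓝 0) := by
      refine h2.congr' ?_
      filter_upwards [self_mem_nhdsWithin] with t (ht : t ∈ Ioi (0:ℝ))
      have ht0 : (0:ℝ) < t := ht
      simp only [Function.comp, hg_def]
      rw [Real.inv_rpow ht0.le, ← Real.rpow_neg ht0.le]
    have h4 := ENNReal.Tendsto.mul_const (ENNReal.tendsto_ofReal h3) (Or.inr hU1)
    simpa using h4
  have htail_ev : ∀ᶠ t in 𝓝[>] (0:ℝ), ENNReal.ofReal (g t) * U1 < (k:ℝ≥0∞)/2 :=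
    htail0.eventually_lt_const hhalf
  have hsm : Ioo (0:ℝ) (min (δ^2) 1) ∈ 𝓝[>] (0:ℝ) :=
    Ioo_mem_nhdsGT_of_mem ⟨le_refl 0, by positivity⟩
  -- measurability
  have hmeas : ∀ s : ℝ, Measurable fun ξ : EuclideanSpace ℝ (Fin n) =>
      ENNReal.ofReal (heatK n (x - ξ) s) := by
    intro s
    apply ENNReal.measurable_ofReal.comp
    apply Continuous.measurable
    unfold heatK
    fun_prop
  filter_upwards [hsm, htail_ev] with t ht htail
  have ht0 : (0:ℝ) < t := ht.1
  have htδ : t < δ^2 := lt_of_lt_of_le ht.2 (min_le_left _ _)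
  have ht1 : t ≤ 1 := le_of_lt (lt_of_lt_of_le ht.2 (min_le_right _ _))
  set st : ℝ := Real.sqrt t with hst_def
  have hst0 : 0 < st := Real.sqrt_pos.mpr ht0
  have hstδ : st < δ := by
    rw [hst_def, show δ = Real.sqrt (δ^2) from (Real.sqrt_sq hδ0.le).symm]
    exact Real.sqrt_lt_sqrt ht0.le htδ
  have htα : 0 ≤ t ^ (α/2) := Real.rpow_nonneg ht0.le _
  -- splitting
  have hsplit : (∫⁻ ξ, ENNReal.ofReal (heatK n (x - ξ) t) ∂μ)
      = (∫⁻ ξ in ball x δ, ENNReal.ofReal (heatK n (x - ξ) t) ∂μ)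
        + (∫⁻ ξ in (ball x δ)ᶜ, ENNReal.ofReal (heatK n (x - ξ) t) ∂μ) :=
    (lintegral_add_compl _ measurableSet_ball).symm
  -- Part A
  set A : ℕ → Set (EuclideanSpace ℝ (Fin n)) :=
    fun j => ball x (min (((j:ℝ)+1)*st) δ) \ ball x ((j:ℝ)*st) with hA_def
  have hcov : ball x δ ⊆ ⋃ j, A j := by
    intro y hy
    have hex : ∃ m : ℕ, dist y x < ((m:ℝ)+1)*st := by
      obtain ⟨m, hm⟩ := exists_nat_gt (dist y x / st)
      rw [div_lt_iff₀ hst0] at hm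
      exact ⟨m, by nlinarith⟩
    refine mem_iUnion.mpr ⟨Nat.find hex, ?_, ?_⟩
    · exact mem_ball.mpr (lt_min (Nat.find_spec hex) (mem_ball.mp hy))
    · intro hmem
      rcases Nat.eq_zero_or_pos (Nat.find hex) with h0 | hpos
      · rw [h0] at hmem
        have := mem_ball.mp hmem
        simp only [Nat.cast_zero, zero_mul] at this
        exact absurd this (not_lt.2 dist_nonneg)
      · have hmin := Nat.find_min hex (Nat.pred_lt hpos.ne')
        apply hmin
        have hcast : (((Nat.find hex).pred : ℕ) : ℝ) + 1 = (Nat.find hex : ℝ) := by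
          rw [Nat.pred_eq_sub_one, Nat.cast_sub hpos]
          push_cast
          ring
        rw [hcast]
        exact mem_ball.mp hmem
  have hA_meas : ∀ j, MeasurableSet (A j) := fun j =>
    measurableSet_ball.diff measurableSet_ball
  set K : ℝ := (4*Real.pi*t) ^ (-(n:ℝ)/2) * (c * k * st ^ d) with hK_def
  have hK0 : 0 ≤ K := by rw [hK_def]; positivity
  have hterm : ∀ j : ℕ, (∫⁻ ξ in A j, ENNReal.ofReal (heatK n (x - ξ) t) ∂μ)
      ≤ ENNReal.ofReal K * ENNReal.ofReal (Real.exp (-(j:ℝ)^2/4) * ((j:ℝ)+1)^d) := by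
    intro j
    have step1 : (∫⁻ ξ in A j, ENNReal.ofReal (heatK n (x - ξ) t) ∂μ)
        ≤ (∫⁻ _ in A j,
            ENNReal.ofReal ((4*Real.pi*t) ^ (-(n:ℝ)/2) * Real.exp (-(j:ℝ)^2/4)) ∂μ) := by
      refine setLIntegral_mono' (hA_meas j) fun ξ hξ => ?_
      apply ENNReal.ofReal_le_ofReal
      unfold heatK
      refine mul_le_mul_of_nonneg_left ?_ (by positivity)
      apply Real.exp_le_exp.mpr
      have h1 : (j:ℝ)*st ≤ dist ξ x := by
        have h2 := hξ.2
        rw [mem_ball, not_lt] at h2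
        exact h2
      have h2 : ‖x - ξ‖ = dist ξ x := by rw [dist_comm, dist_eq_norm]
      have h3 : (j:ℝ)^2 * t ≤ ‖x - ξ‖^2 := by
        rw [h2]
        have h4 : ((j:ℝ)*st)^2 ≤ (dist ξ x)^2 := by
          apply sq_le_sq' _ h1
          nlinarith [(dist_nonneg : 0 ≤ dist ξ x), Nat.cast_nonneg (α := ℝ) j, hst0.le]
        calc (j:ℝ)^2*t = ((j:ℝ)*st)^2 := by
              rw [mul_pow, Real.sq_sqrt ht0.le]
          _ ≤ _ := h4
      rw [neg_div, neg_div, neg_le_neg_iff, div_le_div_iff₀ (by norm_num) (by positivity)]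
      nlinarith
    have step2 : (∫⁻ _ in A j,
          ENNReal.ofReal ((4*Real.pi*t) ^ (-(n:ℝ)/2) * Real.exp (-(j:ℝ)^2/4)) ∂μ)
        = ENNReal.ofReal ((4*Real.pi*t) ^ (-(n:ℝ)/2) * Real.exp (-(j:ℝ)^2/4)) * μ (A j) :=
      setLIntegral_const _ _
    have hmin0 : 0 < min (((j:ℝ)+1)*st) δ := lt_min (by positivity) hδ0
    have step3 : μ (A j) ≤ ENNReal.ofReal (c * k * (((j:ℝ)+1)*st) ^ d) := by
      refine le_trans (measure_mono diff_subset)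
        (le_trans (hcon _ hmin0 (min_le_right _ _)) (ENNReal.ofReal_le_ofReal ?_))
      refine mul_le_mul_of_nonneg_left ?_ (by positivity)
      exact Real.rpow_le_rpow hmin0.le (min_le_left _ _) hd.le
    calc (∫⁻ ξ in A j, ENNReal.ofReal (heatK n (x - ξ) t) ∂μ)
        ≤ ENNReal.ofReal ((4*Real.pi*t) ^ (-(n:ℝ)/2) * Real.exp (-(j:ℝ)^2/4))
            * ENNReal.ofReal (c * k * (((j:ℝ)+1)*st) ^ d) := by
          exact le_trans step1 (le_trans step2.le (mul_le_mul_right step3 _))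
      _ = ENNReal.ofReal K * ENNReal.ofReal (Real.exp (-(j:ℝ)^2/4) * ((j:ℝ)+1)^d) := by
          rw [← ENNReal.ofReal_mul (by positivity), ← ENNReal.ofReal_mul hK0]
          congr 1
          rw [hK_def, Real.mul_rpow (by positivity) hst0.le]
          ring
  -- sum over annuli
  have hsumS : (∑' j : ℕ, ENNReal.ofReal (Real.exp (-(j:ℝ)^2/4) * ((j:ℝ)+1)^d))
      ≤ ENNReal.ofReal S := by
    have hle : ∀ j : ℕ, Real.exp (-(j:ℝ)^2/4) * ((j:ℝ)+1)^d
        ≤ ((j:ℝ)+1)^n * Real.exp (-(1:ℝ)/4) ^ j := by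
      intro j
      have h1 : Real.exp (-(j:ℝ)^2/4) ≤ Real.exp (-(1:ℝ)/4) ^ j := by
        rw [← Real.exp_nat_mul]
        apply Real.exp_le_exp.mpr
        have hjj : (j:ℝ) ≤ (j:ℝ)^2 := by exact_mod_cast Nat.le_self_pow two_ne_zero j
        nlinarith
      have h2 : ((j:ℝ)+1)^d ≤ ((j:ℝ)+1)^n := by
        rw [← Real.rpow_natCast ((j:ℝ)+1) n]
        exact Real.rpow_le_rpow_of_exponent_le
          (by linarith [Nat.cast_nonneg (α := ℝ) j]) (by rw [hd_def]; linarith)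
      calc Real.exp (-(j:ℝ)^2/4) * ((j:ℝ)+1)^d
          ≤ (Real.exp (-(1:ℝ)/4) ^ j) * ((j:ℝ)+1)^n :=
            mul_le_mul h1 h2 (by positivity) (by positivity)
        _ = _ := by ring
    calc (∑' j : ℕ, ENNReal.ofReal (Real.exp (-(j:ℝ)^2/4) * ((j:ℝ)+1)^d))
        ≤ ∑' j : ℕ, ENNReal.ofReal (((j:ℝ)+1)^n * Real.exp (-(1:ℝ)/4) ^ j) :=
          ENNReal.tsum_le_tsum fun j => ENNReal.ofReal_le_ofReal (hle j)
      _ = ENNReal.ofReal S :=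
          (ENNReal.ofReal_tsum_of_nonneg (fun j => by positivity) (auxS_summable n)).symm
  have hA_bound : ENNReal.ofReal (t^(α/2))
      * (∫⁻ ξ in ball x δ, ENNReal.ofReal (heatK n (x - ξ) t) ∂μ) ≤ (k:ℝ≥0∞)/2 := by
    have hIA : (∫⁻ ξ in ball x δ, ENNReal.ofReal (heatK n (x - ξ) t) ∂μ)
        ≤ ENNReal.ofReal K * ENNReal.ofReal S := by
      calc (∫⁻ ξ in ball x δ, ENNReal.ofReal (heatK n (x - ξ) t) ∂μ)
          ≤ ∫⁻ ξ in ⋃ j, A j, ENNReal.ofReal (heatK n (x - ξ) t) ∂μ :=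
            lintegral_mono_set hcov
        _ ≤ ∑' j : ℕ, ∫⁻ ξ in A j, ENNReal.ofReal (heatK n (x - ξ) t) ∂μ :=
            lintegral_iUnion_le _ _
        _ ≤ ∑' j : ℕ, ENNReal.ofReal K * ENNReal.ofReal (Real.exp (-(j:ℝ)^2/4) * ((j:ℝ)+1)^d) :=
            ENNReal.tsum_le_tsum hterm
        _ = ENNReal.ofReal K * ∑' j : ℕ, ENNReal.ofReal (Real.exp (-(j:ℝ)^2/4) * ((j:ℝ)+1)^d) :=
            ENNReal.tsum_mul_left
        _ ≤ ENNReal.ofReal K * ENNReal.ofReal S := mul_le_mul_right hsumS _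
    refine le_trans (mul_le_mul_right hIA _) ?_
    rw [← mul_assoc, ← ENNReal.ofReal_mul htα, ← ENNReal.ofReal_mul (by positivity)]
    have e1 : (4*Real.pi*t)^(-(n:ℝ)/2) = (4*Real.pi)^(-(n:ℝ)/2) * t^(-(n:ℝ)/2) :=
      Real.mul_rpow hπ.le ht0.le
    have e2 : st ^ d = t ^ (d/2) := by
      rw [hst_def, Real.sqrt_eq_rpow, ← Real.rpow_mul ht0.le]
      congr 1
      ring
    have e3 : t^(α/2) * t^(-(n:ℝ)/2) * t^(d/2) = 1 := by
      rw [← Real.rpow_add ht0, ← Real.rpow_add ht0,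
        show α/2 + -(n:ℝ)/2 + d/2 = 0 by rw [hd_def]; ring, Real.rpow_zero]
    have e4 : t^(α/2) * K * S = ((4*Real.pi)^(-(n:ℝ)/2) * c) * k * S := by
      calc t^(α/2) * K * S
          = ((4*Real.pi)^(-(n:ℝ)/2) * c * k * S) * (t^(α/2) * t^(-(n:ℝ)/2) * t^(d/2)) := by
            rw [hK_def, e1, e2]; ring
        _ = _ := by rw [e3, mul_one]
    have h40 : (4*Real.pi) ^ ((n:ℝ)/2) ≠ 0 := (Real.rpow_pos_of_pos hπ _).ne'
    have e5 : (4*Real.pi)^(-(n:ℝ)/2) * c = 1/(2*(S+1)) := by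
      rw [hc_def, show (-(n:ℝ)/2) = -((n:ℝ)/2) by ring, Real.rpow_neg hπ.le,
        ← mul_div_assoc, inv_mul_cancel₀ h40]
    have hS1 : (0:ℝ) < S + 1 := by linarith
    have e6 : t^(α/2) * K * S ≤ (k:ℝ)/2 := by
      rw [e4, e5, div_mul_eq_mul_div, div_mul_eq_mul_div, one_mul,
        div_le_div_iff₀ (by linarith) (by norm_num : (0:ℝ) < 2)]
      nlinarith [Nat.cast_nonneg (α := ℝ) k, hS0]
    refine le_trans (ENNReal.ofReal_le_ofReal e6) ?_
    rw [ENNReal.ofReal_div_of_pos (by norm_num), ENNReal.ofReal_natCast, ENNReal.ofReal_ofNat]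
  -- Part B : tail bound
  have hB_bound : ENNReal.ofReal (t^(α/2))
      * (∫⁻ ξ in (ball x δ)ᶜ, ENNReal.ofReal (heatK n (x - ξ) t) ∂μ) ≤ (k:ℝ≥0∞)/2 := by
    have hpt : ∀ ξ : EuclideanSpace ℝ (Fin n), ξ ∈ (ball x δ)ᶜ →
        t^(α/2) * heatK n (x - ξ) t ≤ g t * heatK n (x - ξ) 1 := by
      intro ξ hξ
      have hdist : δ ≤ dist ξ x := by
        rw [mem_compl_iff, mem_ball, not_lt] at hξ; exact hξ
      have hA2 : δ^2 ≤ ‖x - ξ‖^2 := by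
        rw [show ‖x - ξ‖ = dist ξ x by rw [dist_comm, dist_eq_norm]]
        exact pow_le_pow_left₀ hδ0.le hdist 2
      unfold heatK
      rw [hg_def]
      simp only
      rw [Real.mul_rpow hπ.le ht0.le, show (4*Real.pi*(1:ℝ)) = 4*Real.pi by ring]
      have eexp : t^(α/2) * t^(-(n:ℝ)/2) = t^(-(d/2)) := by
        rw [← Real.rpow_add ht0]; congr 1; rw [hd_def]; ring
      have hkey : Real.exp (-‖x - ξ‖^2/(4*t))
          ≤ Real.exp (-(δ^2/4) * t⁻¹) * Real.exp (δ^2/4) * Real.exp (-‖x - ξ‖^2/(4*1)) := by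
        rw [← Real.exp_add, ← Real.exp_add]
        apply Real.exp_le_exp.mpr
        have h4 : (0:ℝ) < 4*t := by linarith
        have expand : -(δ^2/4) * t⁻¹ + δ^2/4 + -‖x - ξ‖^2/(4*1) - (-‖x - ξ‖^2/(4*t))
            = (‖x - ξ‖^2 - δ^2) * (1/(4*t) - 1/4) := by
          field_simp
          ring
        have hfac : 0 ≤ (‖x - ξ‖^2 - δ^2) * (1/(4*t) - 1/4) := by
          apply mul_nonneg (by linarith)
          rw [sub_nonneg]
          apply one_div_le_one_div_of_le h4
          linarith
        linarith
      have hrp : (0:ℝ) ≤ t^(-(d/2)) := Real.rpow_nonneg ht0.le _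
      have hrp2 : (0:ℝ) ≤ (4*Real.pi)^(-(n:ℝ)/2) := Real.rpow_nonneg hπ.le _
      calc t^(α/2) * ((4*Real.pi)^(-(n:ℝ)/2) * t^(-(n:ℝ)/2) * Real.exp (-‖x - ξ‖^2/(4*t)))
          = (4*Real.pi)^(-(n:ℝ)/2) * (t^(α/2) * t^(-(n:ℝ)/2)) * Real.exp (-‖x - ξ‖^2/(4*t)) := by
            ring
        _ = (4*Real.pi)^(-(n:ℝ)/2) * t^(-(d/2)) * Real.exp (-‖x - ξ‖^2/(4*t)) := by rw [eexp]
        _ ≤ (4*Real.pi)^(-(n:ℝ)/2) * t^(-(d/2))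
            * (Real.exp (-(δ^2/4) * t⁻¹) * Real.exp (δ^2/4) * Real.exp (-‖x - ξ‖^2/(4*1))) := by
            exact mul_le_mul_of_nonneg_left hkey (by positivity)
        _ = t^(-(d/2)) * Real.exp (-(δ^2/4) * t⁻¹) * Real.exp (δ^2/4)
            * ((4*Real.pi)^(-(n:ℝ)/2) * Real.exp (-‖x - ξ‖^2/(4*1))) := by ring
    calc ENNReal.ofReal (t^(α/2))
          * ∫⁻ ξ in (ball x δ)ᶜ, ENNReal.ofReal (heatK n (x - ξ) t) ∂μ
        = ∫⁻ ξ in (ball x δ)ᶜ,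
            ENNReal.ofReal (t^(α/2)) * ENNReal.ofReal (heatK n (x - ξ) t) ∂μ :=
          (lintegral_const_mul' _ _ ENNReal.ofReal_ne_top).symm
      _ ≤ ∫⁻ ξ in (ball x δ)ᶜ,
            ENNReal.ofReal (g t) * ENNReal.ofReal (heatK n (x - ξ) 1) ∂μ := by
          refine setLIntegral_mono' measurableSet_ball.compl fun ξ hξ => ?_
          rw [← ENNReal.ofReal_mul htα, ← ENNReal.ofReal_mul (hg0 t ht0)]
          exact ENNReal.ofReal_le_ofReal (hpt ξ hξ)
      _ = ENNReal.ofReal (g t) * ∫⁻ ξ in (ball x δ)ᶜ, ENNReal.ofReal (heatK n (x - ξ) 1) ∂μ :=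
          lintegral_const_mul' _ _ ENNReal.ofReal_ne_top
      _ ≤ ENNReal.ofReal (g t) * U1 := mul_le_mul_right (setLIntegral_le_lintegral _ _) _
      _ ≤ (k:ℝ≥0∞)/2 := htail.le
  calc ENNReal.ofReal (t^(α/2)) * (∫⁻ ξ, ENNReal.ofReal (heatK n (x - ξ) t) ∂μ)
      = ENNReal.ofReal (t^(α/2))
          * (∫⁻ ξ in ball x δ, ENNReal.ofReal (heatK n (x - ξ) t) ∂μ)
        + ENNReal.ofReal (t^(α/2))
          * (∫⁻ ξ in (ball x δ)ᶜ, ENNReal.ofReal (heatK n (x - ξ) t) ∂μ) := by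
        rw [hsplit, mul_add]
    _ ≤ (k:ℝ≥0∞)/2 + (k:ℝ≥0∞)/2 := add_le_add hA_bound hB_bound
    _ = (k:ℝ≥0∞) := ENNReal.add_halves _

set_option maxHeartbeats 2000000 in
theorem stmt15 (n : ℕ) (α : ℝ) (hα : α ∈ Ioo (0 : ℝ) n) :
    ∃ C : ℝ, 0 < C ∧
      ∀ μ : Measure (EuclideanSpace ℝ (Fin n)),
        (∀ (x : EuclideanSpace ℝ (Fin n)) (t : ℝ), 0 < t →
          (∫⁻ ξ, ENNReal.ofReal (heatK n (x - ξ) t) ∂μ) ≠ ⊤) →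
        ∀ R : ℝ, 0 < R → ∀ k : ℕ, 0 < k →
          μH[(n : ℝ) - α] {x : EuclideanSpace ℝ (Fin n) |
              x ∈ ball (0 : EuclideanSpace ℝ (Fin n)) R ∧
                (k : ℝ≥0∞) < limsup (fun t : ℝ =>
                    ENNReal.ofReal (t ^ (α / 2)) *
                      ∫⁻ ξ, ENNReal.ofReal (heatK n (x - ξ) t) ∂μ)
                  (nhdsWithin 0 (Ioi 0))} ≤
            ENNReal.ofReal C * μ (ball 0 (R + 1)) / (k : ℝ≥0∞) := by
  set c : ℝ := (4*Real.pi) ^ ((n:ℝ)/2) / (2*(auxS n+1)) with hc_def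
  have hc0 : 0 < c := by
    have := auxS_nonneg n
    have := Real.pi_pos
    positivity
  obtain ⟨c', hc'0, hdens⟩ := density_lemma n α hα
  clear hc'0
  set d : ℝ := (n:ℝ) - α with hd_def
  have hd : 0 < d := sub_pos.mpr hα.2
  refine ⟨(10:ℝ)^d / c, by positivity, ?_⟩
  intro μ hheat R hR k hk
  set Sset : Set (EuclideanSpace ℝ (Fin n)) :=
    {x : EuclideanSpace ℝ (Fin n) |
      x ∈ ball (0 : EuclideanSpace ℝ (Fin n)) R ∧
        (k : ℝ≥0∞) < limsup (fun t : ℝ =>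
            ENNReal.ofReal (t ^ (α / 2)) *
              ∫⁻ ξ, ENNReal.ofReal (heatK n (x - ξ) t) ∂μ)
          (nhdsWithin 0 (Ioi 0))} with hSset
  have hk0 : ((k:ℝ≥0∞)) ≠ 0 := Nat.cast_ne_zero.mpr hk.ne'
  have hoc0 : ENNReal.ofReal c ≠ 0 := (ENNReal.ofReal_pos.mpr hc0).ne'
  have hoct : ENNReal.ofReal c ≠ ⊤ := ENNReal.ofReal_ne_top
  set B : ℝ≥0∞ := ENNReal.ofReal ((10:ℝ)^d) * (μ (ball 0 (R+1)) / (ENNReal.ofReal c * k))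
    with hB_def
  have main : μH[d] Sset ≤ B := by
    rw [MeasureTheory.Measure.hausdorffMeasure_apply]
    refine iSup₂_le fun ε hε => ?_
    -- choose the scale
    set ε' : ℝ≥0∞ := min ε 1 with hε'_def
    have hε'0 : ε' ≠ 0 := by
      rw [hε'_def]
      exact (lt_min hε zero_lt_one).ne'
    have hε't : ε' ≠ ⊤ := by
      simp only [hε'_def]
      exact ne_top_of_le_ne_top one_ne_top (min_le_right _ _)
    set δ : ℝ := ε'.toReal / 20 with hδ_def
    have hδ0 : 0 < δ := by
      have := ENNReal.toReal_pos hε'0 hε't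
      positivity
    have hδ1 : δ ≤ 1 := by
      have h1 : ε'.toReal ≤ 1 := by
        rw [show (1:ℝ) = (1:ℝ≥0∞).toReal by simp]
        exact ENNReal.toReal_mono one_ne_top (min_le_right _ _)
      rw [hδ_def]; linarith
    have hδε : ENNReal.ofReal (10 * δ) ≤ ε := by
      refine le_trans ?_ (min_le_left ε 1)
      rw [show (10:ℝ) * δ = ε'.toReal / 2 by rw [hδ_def]; ring]
      have h2 : ε'.toReal / 2 ≤ ε'.toReal := by
        have h3 : (0:ℝ) ≤ ε'.toReal := ENNReal.toReal_nonneg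
        linarith
      refine le_trans (ENNReal.ofReal_le_ofReal h2) ?_
      rw [ENNReal.ofReal_toReal hε't]
    -- choose radii
    choose! rfun hr0 hrδ hrμ using
      fun (z : EuclideanSpace ℝ (Fin n)) (hz : z ∈ Sset) =>
        hdens μ z (hheat z 1 one_pos) k hk hz.2 δ hδ0 hδ1
    -- Vitali
    obtain ⟨u, huS, hdisj, hcover⟩ :=
      Vitali.exists_disjoint_subfamily_covering_enlargement_closedBall Sset
        (fun z => z) rfun δ (fun a ha => hrδ a ha) 5 (by norm_num)
    have hcnt : u.Countable := by
      refine hdisj.countable_of_nonempty_interior fun b hb => ?_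
      rw [interior_closedBall _ (hr0 b (huS hb)).ne']
      exact ⟨b, mem_ball_self (hr0 b (huS hb))⟩
    haveI : Countable ↥u := hcnt.to_subtype
    haveI : Encodable ↥u := hcnt.toEncodable
    set F : ℕ → Set (EuclideanSpace ℝ (Fin n)) := fun m =>
      ⋃ (b : ↥u) (_ : Encodable.encode b = m), closedBall (b : EuclideanSpace ℝ (Fin n))
        (5 * rfun b) with hF_def
    have hFe : ∀ b : ↥u, F (Encodable.encode b)
        = closedBall (b : EuclideanSpace ℝ (Fin n)) (5 * rfun b) := by
      intro b
      apply Subset.antisymm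
      · intro y hy
        simp only [hF_def, mem_iUnion] at hy
        obtain ⟨b', hb', hy⟩ := hy
        rwa [Encodable.encode_injective hb'] at hy
      · intro y hy
        simp only [hF_def, mem_iUnion]
        exact ⟨b, rfl, hy⟩
    have hFdesc : ∀ m : ℕ, F m = ∅ ∨ ∃ b : ↥u, Encodable.encode b = m := by
      intro m
      by_cases h : ∃ b : ↥u, Encodable.encode b = m
      · exact Or.inr h
      · left
        ext y
        simp only [hF_def, mem_iUnion, mem_empty_iff_false, iff_false, not_exists]
        intro b hb
        exact absurd ⟨b, hb⟩ h
    have hcov : Sset ⊆ ⋃ m, F m := by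
      intro z hz
      obtain ⟨b, hb, hsub⟩ := hcover z hz
      refine mem_iUnion.2 ⟨Encodable.encode (⟨b, hb⟩ : ↥u), ?_⟩
      rw [hFe ⟨b, hb⟩]
      exact hsub (mem_closedBall_self (hr0 z hz).le)
    have hdiam_ball : ∀ (y : EuclideanSpace ℝ (Fin n)) (ρ : ℝ),
        EMetric.diam (closedBall y ρ) ≤ ENNReal.ofReal (2*ρ) := by
      intro y ρ
      refine EMetric.diam_le fun a ha b' hb' => ?_
      rw [edist_dist]
      refine ENNReal.ofReal_le_ofReal ?_
      have h1 := mem_closedBall.mp ha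
      have h2 := mem_closedBall.mp hb'
      calc dist a b' ≤ dist a y + dist y b' := dist_triangle _ _ _
        _ ≤ ρ + ρ := add_le_add h1 (by rwa [dist_comm])
        _ = 2*ρ := by ring
    have hdiam : ∀ m, EMetric.diam (F m) ≤ ε := by
      intro m
      rcases hFdesc m with h | ⟨b, hb⟩
      · rw [h]; exact EMetric.diam_le (by simp)
      · rw [← hb, hFe b]
        refine le_trans (hdiam_ball _ _) (le_trans ?_ hδε)
        apply ENNReal.ofReal_le_ofReal
        have := hrδ (b : EuclideanSpace ℝ (Fin n)) (huS b.2)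
        linarith
    set G : ℕ → ℝ≥0∞ := fun m => ⨆ _ : (F m).Nonempty, EMetric.diam (F m) ^ d with hG_def
    refine le_trans (iInf_le_of_le F (iInf_le_of_le hcov (iInf_le _ hdiam))) ?_
    -- now bound ∑' m, G m
    have hsupp : Function.support G ⊆ Set.range (Encodable.encode (α := ↥u)) := by
      intro m hm
      rcases hFdesc m with h | ⟨b, hb⟩
      · exfalso
        apply hm
        simp [hG_def, h]
      · exact ⟨b, hb⟩
    have htsum : ∑' m, G m = ∑' b : ↥u, G (Encodable.encode b) := by
      rw [← tsum_subtype_eq_of_support_subset hsupp, tsum_range G Encodable.encode_injective]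
    have hterm : ∀ b : ↥u, G (Encodable.encode b)
        ≤ ENNReal.ofReal ((10:ℝ)^d)
          * (μ (ball (b : EuclideanSpace ℝ (Fin n)) (rfun b)) / (ENNReal.ofReal c * k)) := by
      intro b
      have hrb0 : 0 < rfun b := hr0 b (huS b.2)
      have h1 : G (Encodable.encode b)
          ≤ ENNReal.ofReal ((10 * rfun b) ^ d) := by
        refine iSup_le fun _ => ?_
        rw [hFe b]
        calc EMetric.diam (closedBall (b : EuclideanSpace ℝ (Fin n)) (5 * rfun b)) ^ d
            ≤ (ENNReal.ofReal (2 * (5 * rfun b))) ^ d :=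
              ENNReal.rpow_le_rpow (hdiam_ball _ _) hd.le
          _ = ENNReal.ofReal ((10 * rfun b) ^ d) := by
              rw [show 2 * (5 * rfun b) = 10 * rfun b by ring,
                ENNReal.ofReal_rpow_of_pos (by linarith)]
      refine le_trans h1 ?_
      rw [Real.mul_rpow (by norm_num) hrb0.le,
        ENNReal.ofReal_mul (by positivity)]
      refine mul_le_mul_right ?_ _
      rw [ENNReal.le_div_iff_mul_le (Or.inl (by exact mul_ne_zero hoc0 hk0))
        (Or.inl (by exact ENNReal.mul_ne_top hoct (natCast_ne_top k)))]
      have := (hrμ (b : EuclideanSpace ℝ (Fin n)) (huS b.2)).le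
      refine le_trans (le_of_eq ?_) this
      rw [show ((k:ℝ≥0∞)) = ENNReal.ofReal (k : ℝ) by rw [ENNReal.ofReal_natCast],
        ← ENNReal.ofReal_mul hc0.le, ← ENNReal.ofReal_mul (by positivity)]
      congr 1
      ring
    have hdisj' : Pairwise (Function.onFun Disjoint fun b : ↥u =>
        ball (b : EuclideanSpace ℝ (Fin n)) (rfun b)) := by
      intro b b' hne
      have h := hdisj b.2 b'.2 (fun h => hne (Subtype.ext h))
      exact h.mono ball_subset_closedBall ball_subset_closedBall
    have hsub_big : (⋃ b : ↥u, ball (b : EuclideanSpace ℝ (Fin n)) (rfun b)) ⊆ ball 0 (R+1) := by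
      rintro y hy
      obtain ⟨b, hb⟩ := mem_iUnion.mp hy
      have hbin : (b : EuclideanSpace ℝ (Fin n)) ∈ ball (0:EuclideanSpace ℝ (Fin n)) R :=
        (huS b.2).1
      rw [mem_ball] at hb hbin ⊢
      have h1 : rfun b ≤ δ := hrδ _ (huS b.2)
      calc dist y 0 ≤ dist y (b : EuclideanSpace ℝ (Fin n)) + dist (b : EuclideanSpace ℝ (Fin n)) 0 :=
            dist_triangle _ _ _
        _ < rfun b + R := add_lt_add hb hbin
        _ ≤ R + 1 := by linarith
    have hμsum : ∑' b : ↥u, μ (ball (b : EuclideanSpace ℝ (Fin n)) (rfun b)) ≤ μ (ball 0 (R+1)) := by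
      rw [← measure_iUnion hdisj' (fun b => measurableSet_ball)]
      exact measure_mono hsub_big
    calc ∑' m, G m = ∑' b : ↥u, G (Encodable.encode b) := htsum
      _ ≤ ∑' b : ↥u, ENNReal.ofReal ((10:ℝ)^d)
          * (μ (ball (b : EuclideanSpace ℝ (Fin n)) (rfun b)) / (ENNReal.ofReal c * k)) :=
        ENNReal.tsum_le_tsum hterm
      _ = ENNReal.ofReal ((10:ℝ)^d)
          * ((∑' b : ↥u, μ (ball (b : EuclideanSpace ℝ (Fin n)) (rfun b))) / (ENNReal.ofReal c * k)) := by
        rw [ENNReal.tsum_mul_left]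
        congr 1
        simp only [div_eq_mul_inv]
        exact ENNReal.tsum_mul_right
      _ ≤ B := by
        rw [hB_def]
        exact mul_le_mul_right (ENNReal.div_le_div_right hμsum _) _
  refine le_trans main ?_
  rw [hB_def]
  have e1 : ENNReal.ofReal ((10:ℝ)^d) = ENNReal.ofReal ((10:ℝ)^d / c) * ENNReal.ofReal c := by
    rw [← ENNReal.ofReal_mul (by positivity)]
    congr 1
    field_simp
  refine le_of_eq ?_
  calc ENNReal.ofReal ((10:ℝ)^d) * (μ (ball 0 (R+1)) / (ENNReal.ofReal c * k))
      = ENNReal.ofReal ((10:ℝ)^d / c) * ENNReal.ofReal c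
        * (μ (ball 0 (R+1)) / (ENNReal.ofReal c * k)) := by rw [← e1]
    _ = ENNReal.ofReal ((10:ℝ)^d / c)
        * (ENNReal.ofReal c * μ (ball 0 (R+1)) / (ENNReal.ofReal c * k)) := by
        rw [mul_assoc, ← mul_div_assoc]
    _ = ENNReal.ofReal ((10:ℝ)^d / c) * (μ (ball 0 (R+1)) / k) := by
        rw [ENNReal.mul_div_mul_left _ _ hoc0 hoct]
    _ = ENNReal.ofReal ((10:ℝ)^d / c) * μ (ball 0 (R+1)) / k :=
        (mul_div_assoc _ _ _).symm
end

section
/- Let u be a nonnegative heat extension on ℝⁿ × (0,∞) of a Radon measure μ, and suppose limsup_{r→0⁺} μ(B(x,r))/r^{n-α} = 0 at some point x, with α ∈ [0,n). Then limsup_{t→0⁺} t^{α/2} u(x,t) = 0, i.e. t^{α/2} u(x,t) → 0 as t → 0⁺. -/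
open MeasureTheory Filter Metric Set
open scoped Topology ENNReal


lemma aux_summable (β : ℝ) (hβ : 0 ≤ β) :
    Summable (fun k : ℕ => Real.exp ((1 - 4 ^ k) / 16) * ((2:ℝ) ^ k) ^ β) := by
  apply summable_of_ratio_norm_eventually_le (r := 1/2) (by norm_num)
  have h4 : Tendsto (fun k : ℕ => (3:ℝ) * 4 ^ k / 16) atTop atTop := by
    apply Tendsto.atTop_div_const (by norm_num)
    exact (tendsto_pow_atTop_atTop_of_one_lt (by norm_num)).const_mul_atTop (by norm_num)
  have hg : Tendsto (fun k : ℕ => (2:ℝ) ^ β * Real.exp (-(3 * 4 ^ k / 16))) atTop (𝓝 0) := by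
    have := (Real.tendsto_exp_neg_atTop_nhds_zero.comp h4).const_mul ((2:ℝ) ^ β)
    simpa using this
  filter_upwards [hg.eventually_lt_const (show (0:ℝ) < 1/2 by norm_num)] with k hk
  have hpos : (0:ℝ) < Real.exp ((1 - 4 ^ k) / 16) * ((2:ℝ) ^ k) ^ β := by positivity
  have key : Real.exp ((1 - 4 ^ (k+1)) / 16) * ((2:ℝ) ^ (k+1)) ^ β
      = (Real.exp ((1 - 4 ^ k) / 16) * ((2:ℝ) ^ k) ^ β) * ((2:ℝ) ^ β * Real.exp (-(3 * 4 ^ k / 16))) := by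
    have e1 : Real.exp ((1 - 4 ^ (k+1) : ℝ) / 16)
        = Real.exp ((1 - 4 ^ k) / 16) * Real.exp (-(3 * 4 ^ k / 16)) := by
      rw [← Real.exp_add]; congr 1; rw [pow_succ]; ring
    rw [pow_succ (2:ℝ), Real.mul_rpow (by positivity) (by norm_num), e1]
    ring
  rw [key]
  rw [Real.norm_of_nonneg (by positivity), Real.norm_of_nonneg hpos.le]
  calc Real.exp ((1 - 4 ^ k) / 16) * ((2:ℝ) ^ k) ^ β * ((2:ℝ) ^ β * Real.exp (-(3 * 4 ^ k / 16)))
      ≤ Real.exp ((1 - 4 ^ k) / 16) * ((2:ℝ) ^ k) ^ β * (1/2) := by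
        exact mul_le_mul_of_nonneg_left hk.le hpos.le
    _ = 1/2 * (Real.exp ((1 - 4 ^ k) / 16) * ((2:ℝ) ^ k) ^ β) := by ring


lemma aux_near (n : ℕ) (x : EuclideanSpace ℝ (Fin n)) (μ : Measure (EuclideanSpace ℝ (Fin n)))
    (β ε₁ r₀ t C : ℝ) (hβ : 0 < β) (hε₁ : 0 ≤ ε₁) (hr : 0 < r₀) (ht : 0 < t)
    (hC : C = ∑' k : ℕ, Real.exp ((1 - 4 ^ k) / 16) * ((2:ℝ) ^ k) ^ β)
    (hsum : Summable (fun k : ℕ => Real.exp ((1 - 4 ^ k) / 16) * ((2:ℝ) ^ k) ^ β))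
    (hsmall : ∀ r : ℝ, 0 < r → r ≤ r₀ →
      μ (ball x r) ≤ ENNReal.ofReal ε₁ * ENNReal.ofReal (r ^ β)) :
    ∫⁻ ξ in ball x r₀, ENNReal.ofReal (Real.exp (-‖x - ξ‖ ^ 2 / (4 * t))) ∂μ
      ≤ ENNReal.ofReal (ε₁ * t ^ (β / 2)) * ENNReal.ofReal C := by
  set T : ℝ := t ^ (1/2 : ℝ) with hTdef
  have hT : 0 < T := Real.rpow_pos_of_pos ht _
  have hT2 : T ^ 2 = t := by
    rw [hTdef, ← Real.rpow_natCast (t ^ (1/2:ℝ)) 2, ← Real.rpow_mul ht.le]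
    norm_num
  set S : ℕ → Set (EuclideanSpace ℝ (Fin n)) := fun k =>
    match k with
    | 0 => ball x T
    | (j+1) => ball x (2 ^ (j+1) * T) \ ball x (2 ^ j * T) with hSdef
  have hSsub : ∀ k, S k ⊆ ball x (2 ^ k * T) := by
    intro k; cases k with
    | zero => simp [hSdef]
    | succ j => exact diff_subset
  have hball : ∀ k : ℕ, ball x (2 ^ k * T) ⊆ ⋃ j, S j := by
    intro k; induction k with
    | zero => simpa [hSdef] using subset_iUnion S 0
    | succ j ih =>
      intro ξ hξ
      by_cases h : ξ ∈ ball x (2 ^ j * T)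
      · exact ih h
      · exact mem_iUnion.2 ⟨j + 1, ⟨hξ, h⟩⟩
  have hcover : ball x r₀ ⊆ ⋃ j, S j := by
    intro ξ _
    obtain ⟨k, hk⟩ := pow_unbounded_of_one_lt (dist ξ x / T) (one_lt_two (α := ℝ))
    exact hball k (by rw [mem_ball]; rw [div_lt_iff₀ hT] at hk; linarith [hk])
  have hbound : ∀ k, ∀ ξ ∈ S k,
      Real.exp (-‖x - ξ‖ ^ 2 / (4 * t)) ≤ Real.exp ((1 - 4 ^ k) / 16) := by
    intro k ξ hξ
    apply Real.exp_le_exp.2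
    have hnorm : ‖x - ξ‖ = dist ξ x := by rw [← dist_eq_norm]; exact dist_comm x ξ
    cases k with
    | zero =>
      simp only [pow_zero, sub_self, zero_div]
      apply div_nonpos_of_nonpos_of_nonneg (neg_nonpos.2 (by positivity)) (by positivity)
    | succ j =>
      have hd : 2 ^ j * T ≤ dist ξ x := by
        have := hξ.2; rw [mem_ball, not_lt] at this; exact this
      have hsq : (4:ℝ) ^ j * t ≤ ‖x - ξ‖ ^ 2 := by
        rw [hnorm]
        calc (4:ℝ) ^ j * t = (2 ^ j * T) ^ 2 := by
              rw [mul_pow, hT2, show ((2:ℝ)^j)^2 = 4^j by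
                rw [← pow_mul, mul_comm, pow_mul]; norm_num]
          _ ≤ dist ξ x ^ 2 := by
              apply pow_le_pow_left₀ (by positivity) hd
      have h4t : (0:ℝ) < 4 * t := by linarith
      calc -‖x - ξ‖ ^ 2 / (4 * t) ≤ -((4:ℝ) ^ j * t) / (4 * t) := by
            gcongr
        _ = -(4 ^ j) / 4 := by field_simp
        _ ≤ (1 - 4 ^ (j+1)) / 16 := by
            rw [div_le_div_iff₀ (by norm_num) (by norm_num), pow_succ]
            ring_nf
            nlinarith [pow_pos (show (0:ℝ)<4 by norm_num) j]
  -- per-annulus estimate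
  have hterm : ∀ k : ℕ,
      ∫⁻ ξ in S k ∩ ball x r₀, ENNReal.ofReal (Real.exp (-‖x - ξ‖ ^ 2 / (4 * t))) ∂μ
        ≤ ENNReal.ofReal (ε₁ * t ^ (β / 2)) *
            ENNReal.ofReal (Real.exp ((1 - 4 ^ k) / 16) * ((2:ℝ) ^ k) ^ β) := by
    intro k
    have h2T : (0:ℝ) < 2 ^ k * T := by positivity
    have hmin : (0:ℝ) < min (2 ^ k * T) r₀ := lt_min h2T hr
    have hsubmin : S k ∩ ball x r₀ ⊆ ball x (min (2 ^ k * T) r₀) := by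
      intro ξ hξ
      rw [mem_ball, lt_min_iff]
      exact ⟨hSsub k hξ.1, hξ.2⟩
    calc ∫⁻ ξ in S k ∩ ball x r₀, ENNReal.ofReal (Real.exp (-‖x - ξ‖ ^ 2 / (4 * t))) ∂μ
        ≤ ∫⁻ _ in S k ∩ ball x r₀, ENNReal.ofReal (Real.exp ((1 - 4 ^ k) / 16)) ∂μ := by
          apply setLIntegral_mono measurable_const
          intro ξ hξ
          exact ENNReal.ofReal_le_ofReal (hbound k ξ hξ.1)
      _ = ENNReal.ofReal (Real.exp ((1 - 4 ^ k) / 16)) * μ (S k ∩ ball x r₀) :=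
          setLIntegral_const _ _
      _ ≤ ENNReal.ofReal (Real.exp ((1 - 4 ^ k) / 16)) * μ (ball x (min (2 ^ k * T) r₀)) := by
          exact mul_le_mul_right (measure_mono hsubmin) _
      _ ≤ ENNReal.ofReal (Real.exp ((1 - 4 ^ k) / 16)) *
            (ENNReal.ofReal ε₁ * ENNReal.ofReal ((min (2 ^ k * T) r₀) ^ β)) :=
          mul_le_mul_right (hsmall _ hmin (min_le_right _ _)) _
      _ ≤ ENNReal.ofReal (Real.exp ((1 - 4 ^ k) / 16)) *
            (ENNReal.ofReal ε₁ * ENNReal.ofReal ((2 ^ k * T) ^ β)) := by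
          apply mul_le_mul_right
          apply mul_le_mul_right
          exact ENNReal.ofReal_le_ofReal
            (Real.rpow_le_rpow hmin.le (min_le_left _ _) hβ.le)
      _ = ENNReal.ofReal (ε₁ * t ^ (β / 2)) *
            ENNReal.ofReal (Real.exp ((1 - 4 ^ k) / 16) * ((2:ℝ) ^ k) ^ β) := by
          rw [← ENNReal.ofReal_mul hε₁, ← ENNReal.ofReal_mul (by positivity),
            ← ENNReal.ofReal_mul (by positivity)]
          congr 1
          rw [Real.mul_rpow (by positivity) hT.le, hTdef, ← Real.rpow_natCast (2:ℝ) k,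
            ← Real.rpow_mul ht.le]
          ring_nf
  calc ∫⁻ ξ in ball x r₀, ENNReal.ofReal (Real.exp (-‖x - ξ‖ ^ 2 / (4 * t))) ∂μ
      ≤ ∫⁻ ξ in ⋃ k, (S k ∩ ball x r₀), ENNReal.ofReal (Real.exp (-‖x - ξ‖ ^ 2 / (4 * t))) ∂μ := by
        apply lintegral_mono_set
        intro ξ hξ
        obtain ⟨_, ⟨k, rfl⟩, hk⟩ := hcover hξ
        exact mem_iUnion.2 ⟨k, hk, hξ⟩
    _ ≤ ∑' k, ∫⁻ ξ in S k ∩ ball x r₀, ENNReal.ofReal (Real.exp (-‖x - ξ‖ ^ 2 / (4 * t))) ∂μ :=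
        lintegral_iUnion_le _ _
    _ ≤ ∑' k, ENNReal.ofReal (ε₁ * t ^ (β / 2)) *
          ENNReal.ofReal (Real.exp ((1 - 4 ^ k) / 16) * ((2:ℝ) ^ k) ^ β) :=
        ENNReal.tsum_le_tsum hterm
    _ = ENNReal.ofReal (ε₁ * t ^ (β / 2)) *
          ∑' k, ENNReal.ofReal (Real.exp ((1 - 4 ^ k) / 16) * ((2:ℝ) ^ k) ^ β) :=
        ENNReal.tsum_mul_left
    _ = ENNReal.ofReal (ε₁ * t ^ (β / 2)) * ENNReal.ofReal C := by
        rw [← ENNReal.ofReal_tsum_of_nonneg (fun k => by positivity) hsum, hC]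

theorem stmt17 (n : ℕ) (α : ℝ) (hα : α ∈ Ico (0 : ℝ) n)
    (μ : Measure (EuclideanSpace ℝ (Fin n)))
    (hfin : ∀ (x : EuclideanSpace ℝ (Fin n)) (t : ℝ), 0 < t →
      (∫⁻ ξ, ENNReal.ofReal (heatK n (x - ξ) t) ∂μ) ≠ ⊤)
    (x : EuclideanSpace ℝ (Fin n))
    (hx : limsup (fun r : ℝ => μ (ball x r) / ENNReal.ofReal (r ^ ((n : ℝ) - α)))
        (nhdsWithin 0 (Ioi 0)) = 0) :
    Tendsto (fun t : ℝ =>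
        t ^ (α / 2) * (∫⁻ ξ, ENNReal.ofReal (heatK n (x - ξ) t) ∂μ).toReal)
      (nhdsWithin 0 (Ioi 0)) (nhds 0) := by
  obtain ⟨hα0, hαn⟩ := hα
  set β : ℝ := (n : ℝ) - α with hβdef
  have hβ : 0 < β := sub_pos.2 hαn
  set F : ℝ → ℝ≥0∞ :=
    fun t => ∫⁻ ξ, ENNReal.ofReal (Real.exp (-‖x - ξ‖ ^ 2 / (4 * t))) ∂μ with hFdef
  have hπ : (0:ℝ) < Real.pi := Real.pi_pos
  have hsplit : ∀ t : ℝ, 0 < t → (∫⁻ ξ, ENNReal.ofReal (heatK n (x - ξ) t) ∂μ)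
      = ENNReal.ofReal ((4 * Real.pi * t) ^ (-(n:ℝ)/2)) * F t := by
    intro t ht
    have h0 : (0:ℝ) ≤ (4 * Real.pi * t) ^ (-(n:ℝ)/2) :=
      Real.rpow_nonneg (by positivity) _
    unfold heatK
    simp_rw [ENNReal.ofReal_mul h0]
    exact lintegral_const_mul' _ _ ENNReal.ofReal_ne_top
  have hFfin : ∀ t : ℝ, 0 < t → F t ≠ ⊤ := by
    intro t ht hcontra
    apply hfin x t ht
    rw [hsplit t ht, hcontra, ENNReal.mul_top]
    exact (ENNReal.ofReal_pos.2 (Real.rpow_pos_of_pos (by positivity) _)).ne'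
  set M : ℝ≥0∞ := ∫⁻ ξ, ENNReal.ofReal (Real.exp (-‖x - ξ‖ ^ 2 / 8)) ∂μ with hMdef
  have hM : M ≠ ⊤ := by
    have h2 := hFfin 2 (by norm_num)
    rw [hFdef] at h2
    rw [hMdef]
    convert h2 using 4
    norm_num
  set C : ℝ := ∑' k : ℕ, Real.exp ((1 - 4 ^ k) / 16) * ((2:ℝ) ^ k) ^ β with hCdef
  have hsum := aux_summable β hβ.le
  have hC0 : 0 ≤ C := tsum_nonneg (fun k => by positivity)
  set P : ℝ := (4 * Real.pi) ^ (-(n:ℝ)/2) with hPdef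
  have hP : 0 < P := Real.rpow_pos_of_pos (by positivity) _
  set D : ℝ := C * P with hDdef
  have hD0 : 0 ≤ D := mul_nonneg hC0 hP.le
  have hnorm : ∀ ξ : EuclideanSpace ℝ (Fin n), ‖x - ξ‖ = dist ξ x := by
    intro ξ; rw [← dist_eq_norm]; exact dist_comm x ξ
  have hgmeas : Measurable fun ξ : EuclideanSpace ℝ (Fin n) =>
      ENNReal.ofReal (Real.exp (-‖x - ξ‖ ^ 2 / 8)) := by
    apply Measurable.ennreal_ofReal
    apply Real.continuous_exp.measurable.comp
    exact (((continuous_const.sub continuous_id).norm.pow 2).neg.div_const 8).measurable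
  rw [Metric.tendsto_nhds]
  intro ε hε
  set ε₁ : ℝ := ε / (2 * (D + 1)) with hε₁def
  have hε₁pos : 0 < ε₁ := by positivity
  have hε₁D : ε₁ * D < ε / 2 := by
    have key : ε₁ * (D + 1) = ε / 2 := by
      rw [hε₁def]; field_simp
    nlinarith
  have hev : ∀ᶠ r in 𝓝[>] (0:ℝ),
      μ (ball x r) / ENNReal.ofReal (r ^ β) < ENNReal.ofReal ε₁ := by
    apply eventually_lt_of_limsup_lt
    · rw [hx]
      exact ENNReal.ofReal_pos.2 hε₁pos
    · exact Filter.isBounded_le_of_top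
  rw [eventually_nhdsWithin_iff, Metric.eventually_nhds_iff] at hev
  obtain ⟨δ, hδ, hδ'⟩ := hev
  set r₀ : ℝ := δ / 2 with hr₀def
  have hr₀ : 0 < r₀ := by positivity
  have hsmall : ∀ r : ℝ, 0 < r → r ≤ r₀ →
      μ (ball x r) ≤ ENNReal.ofReal ε₁ * ENNReal.ofReal (r ^ β) := by
    intro r h0 hle
    have hd : dist r 0 < δ := by
      rw [Real.dist_eq, sub_zero, abs_of_pos h0]; rw [hr₀def] at hle; linarith
    have h1 := hδ' hd h0
    have hne : ENNReal.ofReal (r ^ β) ≠ 0 :=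
      (ENNReal.ofReal_pos.2 (Real.rpow_pos_of_pos h0 _)).ne'
    rw [ENNReal.div_lt_iff (Or.inl hne) (Or.inl ENNReal.ofReal_ne_top)] at h1
    exact h1.le
  -- tail bound
  have htail : ∀ t : ℝ, 0 < t → t ≤ 1 →
      ∫⁻ ξ in (ball x r₀)ᶜ, ENNReal.ofReal (Real.exp (-‖x - ξ‖ ^ 2 / (4 * t))) ∂μ
        ≤ ENNReal.ofReal (Real.exp (-(r₀ ^ 2) / (8 * t))) * M := by
    intro t ht ht1
    calc ∫⁻ ξ in (ball x r₀)ᶜ, ENNReal.ofReal (Real.exp (-‖x - ξ‖ ^ 2 / (4 * t))) ∂μ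
        ≤ ∫⁻ ξ in (ball x r₀)ᶜ, ENNReal.ofReal (Real.exp (-(r₀ ^ 2) / (8 * t))) *
            ENNReal.ofReal (Real.exp (-‖x - ξ‖ ^ 2 / 8)) ∂μ := by
          apply setLIntegral_mono (measurable_const.mul hgmeas)
          intro ξ hξ
          simp only [Pi.mul_apply]
          rw [← ENNReal.ofReal_mul (Real.exp_nonneg _), ← Real.exp_add]
          apply ENNReal.ofReal_le_ofReal
          apply Real.exp_le_exp.2
          have hd : r₀ ≤ dist ξ x := by
            have := hξ; rw [mem_compl_iff, mem_ball, not_lt] at this; exact this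
          have hr2 : r₀ ^ 2 ≤ ‖x - ξ‖ ^ 2 := by
            rw [hnorm ξ]; exact pow_le_pow_left₀ hr₀.le hd 2
          have hnn : (0:ℝ) ≤ ‖x - ξ‖ ^ 2 := by positivity
          have e0 : -‖x - ξ‖ ^ 2 / (4 * t) = -(‖x - ξ‖ ^ 2 / (8 * t)) - ‖x - ξ‖ ^ 2 / (8 * t) := by
            field_simp; ring
          have e1 : r₀ ^ 2 / (8 * t) ≤ ‖x - ξ‖ ^ 2 / (8 * t) := by gcongr
          have e2 : ‖x - ξ‖ ^ 2 / 8 ≤ ‖x - ξ‖ ^ 2 / (8 * t) := by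
            apply div_le_div_of_nonneg_left hnn (by linarith) (by nlinarith)
          rw [e0]
          have : -(r₀^2) / (8*t) = -(r₀^2 / (8*t)) := by ring
          rw [this]
          linarith
      _ = ENNReal.ofReal (Real.exp (-(r₀ ^ 2) / (8 * t))) *
            ∫⁻ ξ in (ball x r₀)ᶜ, ENNReal.ofReal (Real.exp (-‖x - ξ‖ ^ 2 / 8)) ∂μ :=
          lintegral_const_mul' _ _ ENNReal.ofReal_ne_top
      _ ≤ ENNReal.ofReal (Real.exp (-(r₀ ^ 2) / (8 * t))) * M :=
          mul_le_mul_right (setLIntegral_le_lintegral _ _) _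
  -- tendsto of the tail term
  have hGt : Tendsto (fun t : ℝ => P * M.toReal *
      (t ^ ((α - n) / 2) * Real.exp (-(r₀ ^ 2) / (8 * t)))) (𝓝[>] 0) (𝓝 0) := by
    have h1 := tendsto_rpow_mul_exp_neg_mul_atTop_nhds_zero (β / 2) (r₀ ^ 2 / 8)
      (by positivity)
    have h2 := h1.comp tendsto_inv_nhdsGT_zero
    have h3 : Tendsto (fun t : ℝ => t ^ ((α - n) / 2) * Real.exp (-(r₀ ^ 2) / (8 * t)))
        (𝓝[>] (0:ℝ)) (𝓝 0) := by
      apply h2.congr'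
      filter_upwards [self_mem_nhdsWithin] with t ht
      have ht0 : (0:ℝ) < t := ht
      simp only [Function.comp_apply]
      rw [Real.inv_rpow ht0.le, ← Real.rpow_neg ht0.le]
      congr 1
      · congr 1
        rw [hβdef]; ring
      · congr 1
        field_simp
    have := h3.const_mul (P * M.toReal)
    simpa using this
  have hhalf : (0:ℝ) < ε / 2 := by positivity
  filter_upwards [self_mem_nhdsWithin, Ioo_mem_nhdsGT one_pos,
    hGt.eventually_lt_const hhalf] with t ht htI hGlt
  have ht0 : (0:ℝ) < t := ht
  have ht1 : t ≤ 1 := htI.2.le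
  -- assemble
  have hA : (∫⁻ ξ, ENNReal.ofReal (heatK n (x - ξ) t) ∂μ).toReal
      = (4 * Real.pi * t) ^ (-(n:ℝ)/2) * (F t).toReal := by
    rw [hsplit t ht0, ENNReal.toReal_mul,
      ENNReal.toReal_ofReal (Real.rpow_nonneg (by positivity) _)]
  have hFle : F t ≤ ENNReal.ofReal (ε₁ * t ^ (β / 2)) * ENNReal.ofReal C +
      ENNReal.ofReal (Real.exp (-(r₀ ^ 2) / (8 * t))) * M := by
    have hFeq : F t = (∫⁻ ξ in ball x r₀, ENNReal.ofReal (Real.exp (-‖x - ξ‖ ^ 2 / (4 * t))) ∂μ) +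
        ∫⁻ ξ in (ball x r₀)ᶜ, ENNReal.ofReal (Real.exp (-‖x - ξ‖ ^ 2 / (4 * t))) ∂μ :=
      (lintegral_add_compl (μ := μ)
        (fun ξ => ENNReal.ofReal (Real.exp (-‖x - ξ‖ ^ 2 / (4 * t))))
        (measurableSet_ball (x := x) (ε := r₀))).symm
    rw [hFeq]
    exact add_le_add
      (aux_near n x μ β ε₁ r₀ t C hβ hε₁pos.le hr₀ ht0 hCdef hsum hsmall)
      (htail t ht0 ht1)
  have hRfin : ENNReal.ofReal (ε₁ * t ^ (β / 2)) * ENNReal.ofReal C +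
      ENNReal.ofReal (Real.exp (-(r₀ ^ 2) / (8 * t))) * M ≠ ⊤ := by
    apply ENNReal.add_ne_top.2
    exact ⟨ENNReal.mul_ne_top ENNReal.ofReal_ne_top ENNReal.ofReal_ne_top,
      ENNReal.mul_ne_top ENNReal.ofReal_ne_top hM⟩
  have hFtoReal : (F t).toReal ≤ ε₁ * t ^ (β / 2) * C +
      Real.exp (-(r₀ ^ 2) / (8 * t)) * M.toReal := by
    have h1 := ENNReal.toReal_mono hRfin hFle
    rw [ENNReal.toReal_add
        (ENNReal.mul_ne_top ENNReal.ofReal_ne_top ENNReal.ofReal_ne_top)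
        (ENNReal.mul_ne_top ENNReal.ofReal_ne_top hM),
      ENNReal.toReal_mul, ENNReal.toReal_mul,
      ENNReal.toReal_ofReal (by positivity),
      ENNReal.toReal_ofReal hC0,
      ENNReal.toReal_ofReal (Real.exp_nonneg _)] at h1
    exact h1
  have hmulP : (4 * Real.pi * t) ^ (-(n:ℝ)/2) = P * t ^ (-(n:ℝ)/2) := by
    rw [hPdef, ← Real.mul_rpow (by positivity) ht0.le]
  have hid1 : t ^ (α/2) * t ^ (-(n:ℝ)/2) * t ^ (β/2) = 1 := by
    rw [← Real.rpow_add ht0, ← Real.rpow_add ht0, hβdef,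
      show α/2 + -(n:ℝ)/2 + ((n:ℝ) - α)/2 = 0 by ring, Real.rpow_zero]
  have hid2 : t ^ (α/2) * t ^ (-(n:ℝ)/2) = t ^ ((α - n)/2) := by
    rw [← Real.rpow_add ht0]
    congr 1; ring
  have hEnn : 0 ≤ t ^ (α/2) * (∫⁻ ξ, ENNReal.ofReal (heatK n (x - ξ) t) ∂μ).toReal := by
    apply mul_nonneg (Real.rpow_nonneg ht0.le _) ENNReal.toReal_nonneg
  rw [Real.dist_eq, sub_zero, abs_of_nonneg hEnn]
  have htα : (0:ℝ) ≤ t ^ (α/2) := Real.rpow_nonneg ht0.le _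
  have htn : (0:ℝ) ≤ t ^ (-(n:ℝ)/2) := Real.rpow_nonneg ht0.le _
  calc t ^ (α/2) * (∫⁻ ξ, ENNReal.ofReal (heatK n (x - ξ) t) ∂μ).toReal
      = t ^ (α/2) * (P * t ^ (-(n:ℝ)/2) * (F t).toReal) := by rw [hA, hmulP]
    _ ≤ t ^ (α/2) * (P * t ^ (-(n:ℝ)/2) * (ε₁ * t ^ (β/2) * C +
          Real.exp (-(r₀ ^ 2) / (8 * t)) * M.toReal)) := by
        apply mul_le_mul_of_nonneg_left _ htα
        apply mul_le_mul_of_nonneg_left hFtoReal (by positivity)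
    _ = ε₁ * (C * P) * (t ^ (α/2) * t ^ (-(n:ℝ)/2) * t ^ (β/2)) +
          P * M.toReal * ((t ^ (α/2) * t ^ (-(n:ℝ)/2)) * Real.exp (-(r₀ ^ 2) / (8 * t))) := by
        ring
    _ = ε₁ * D + P * M.toReal * (t ^ ((α - n)/2) * Real.exp (-(r₀ ^ 2) / (8 * t))) := by
        rw [hid1, hid2, hDdef]; ring
    _ < ε / 2 + ε / 2 := add_lt_add_of_lt_of_le hε₁D hGlt.le
    _ = ε := by ring
end
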